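/- arXiv:2007.02440 — 5 statements merged into one kernel-verified Lean document; each statement's English description precedes it below -/
import Mathlib

section
/- If f ∈ W^{2,1}([a,b]) (twice weakly differentiable with f, f′, f″ integrable), then f is a difference of two convex functions on [a,b], and there is a constant C depending only on b−a such that ‖f‖_{DC([a,b])} ≤ C‖f‖_{W^{2,1}([a,b])}. -/
open Set Metric
open scoped ENNReal

/-- The DC norm of a function on a set `U`: the infimum of `‖f₁‖_{∞,U} + ‖f₂‖_{∞,U}` over all
decompositions `f = f₁ − f₂` of `f` as a difference of convex functions on `U` (with value `∞`
if no bounded decomposition exists). -/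
noncomputable def dcNorm {E : Type*} [NormedAddCommGroup E] [NormedSpace ℝ E]
    (U : Set E) (f : E → ℝ) : ℝ≥0∞ :=
  sInf {r : ℝ≥0∞ | ∃ (f₁ f₂ : E → ℝ) (M₁ M₂ : ℝ),
    ConvexOn ℝ U f₁ ∧ ConvexOn ℝ U f₂ ∧ (∀ x ∈ U, f x = f₁ x - f₂ x) ∧
    (∀ x ∈ U, |f₁ x| ≤ M₁) ∧ (∀ x ∈ U, |f₂ x| ≤ M₂) ∧ r = ENNReal.ofReal (M₁ + M₂)}

open MeasureTheory intervalIntegral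

/-- The primitive of a nonnegative integrable function is monotone. -/
lemma aux_mono_primitive {h : ℝ → ℝ} (hint : Integrable h) (hpos : ∀ t, 0 ≤ h t) (c a : ℝ) :
    Monotone (fun x => c + ∫ t in a..x, h t) := by
  intro x y hxy
  have h1 : (∫ t in a..x, h t) + ∫ t in x..y, h t = ∫ t in a..y, h t :=
    intervalIntegral.integral_add_adjacent_intervals hint.intervalIntegrable hint.intervalIntegrable
  have h2 : 0 ≤ ∫ t in x..y, h t :=
    intervalIntegral.integral_nonneg hxy (fun u _ => hpos u)
  simp only
  linarith

/-- The primitive of a continuous monotone function is convex. -/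
lemma aux_convex_primitive {g : ℝ → ℝ} (hg : Continuous g) (hmono : Monotone g) (c a : ℝ) :
    ConvexOn ℝ Set.univ (fun x => c + ∫ t in a..x, g t) := by
  have hd : ∀ x, HasDerivAt (fun x => c + ∫ t in a..x, g t) (g x) x := fun x =>
    (intervalIntegral.integral_hasDerivAt_right (hg.intervalIntegrable a x)
      (hg.stronglyMeasurableAtFilter _ _) hg.continuousAt).const_add c
  have hdiff : Differentiable ℝ (fun x => c + ∫ t in a..x, g t) :=
    fun x => (hd x).differentiableAt
  have hder : deriv (fun x => c + ∫ t in a..x, g t) = g := funext fun x => (hd x).deriv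
  exact Monotone.convexOn_univ_of_deriv hdiff (by rw [hder]; exact hmono)

/-- If `f ∈ W^{2,1}([a,b])`, then `f` is a difference of two convex functions on `[a,b]`, and
there is a constant `C` depending only on `b − a` with
`‖f‖_{DC([a,b])} ≤ C ‖f‖_{W^{2,1}([a,b])}`. -/
theorem stmt8 (ℓ : ℝ) (hℓ : 0 < ℓ) :
    ∃ C : ℝ, 0 < C ∧ ∀ (a b : ℝ), b - a = ℓ → ∀ f f' f'' : ℝ → ℝ,
      (∀ x ∈ Icc a b, f x = f a + ∫ t in a..x, f' t) →
      (∀ x ∈ Icc a b, f' x = f' a + ∫ t in a..x, f'' t) →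
      IntegrableOn f'' (Icc a b) →
      (∃ f₁ f₂ : ℝ → ℝ, ConvexOn ℝ (Icc a b) f₁ ∧ ConvexOn ℝ (Icc a b) f₂ ∧
        ∀ x ∈ Icc a b, f x = f₁ x - f₂ x) ∧
      dcNorm (Icc a b) f
        ≤ ENNReal.ofReal (C * ((∫ t in Icc a b, |f t|) + (∫ t in Icc a b, |f' t|)
            + ∫ t in Icc a b, |f'' t|)) := by
  refine ⟨1/ℓ + 1 + 2*ℓ, by positivity, ?_⟩
  intro a b hab f f' f'' hf hf' hint
  have hab' : a ≤ b := by linarith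
  set I₀ : ℝ := ∫ t in Icc a b, |f t| with hI₀
  set I₁ : ℝ := ∫ t in Icc a b, |f' t| with hI₁
  set I₂ : ℝ := ∫ t in Icc a b, |f'' t| with hI₂
  have habs_int : IntegrableOn (fun t => |f'' t|) (Icc a b) := hint.abs
  have hI₂0 : 0 ≤ I₂ := setIntegral_nonneg measurableSet_Icc (fun t _ => abs_nonneg _)
  -- positive and negative parts of f'' (extended by 0 outside [a,b])
  set p : ℝ → ℝ := (Icc a b).indicator (fun u => max (f'' u) 0) with hp
  set q : ℝ → ℝ := (Icc a b).indicator (fun u => max (-f'' u) 0) with hq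
  have hp_int : Integrable p := IntegrableOn.integrable_indicator hint.pos_part measurableSet_Icc
  have hq_int : Integrable q := IntegrableOn.integrable_indicator hint.neg.pos_part measurableSet_Icc
  have hp_pos : ∀ t, 0 ≤ p t := fun t =>
    Set.indicator_nonneg (fun u _ => le_max_right _ _) t
  have hq_pos : ∀ t, 0 ≤ q t := fun t =>
    Set.indicator_nonneg (fun u _ => le_max_right _ _) t
  -- the total integrals of p and q are at most I₂
  have hp_total : ∫ t, p t ≤ I₂ := by
    rw [hp, MeasureTheory.integral_indicator measurableSet_Icc]
    exact setIntegral_mono_on hint.pos_part habs_int measurableSet_Icc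
      (fun u _ => max_le (le_abs_self _) (abs_nonneg _))
  have hq_total : ∫ t, q t ≤ I₂ := by
    rw [hq, MeasureTheory.integral_indicator measurableSet_Icc]
    exact setIntegral_mono_on hint.neg.pos_part habs_int measurableSet_Icc
      (fun u _ => max_le (neg_le_abs _) (abs_nonneg _))
  -- first derivatives of the convex pieces
  set g₁ : ℝ → ℝ := fun x => f' a + ∫ t in a..x, p t with hg₁
  set g₂ : ℝ → ℝ := fun x => 0 + ∫ t in a..x, q t with hg₂
  have hg₁c : Continuous g₁ := continuous_const.add (hp_int.continuous_primitive a)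
  have hg₂c : Continuous g₂ := continuous_const.add (hq_int.continuous_primitive a)
  have hg₁m : Monotone g₁ := aux_mono_primitive hp_int hp_pos _ a
  have hg₂m : Monotone g₂ := aux_mono_primitive hq_int hq_pos _ a
  -- the convex pieces
  set F₁ : ℝ → ℝ := fun x => f a + ∫ t in a..x, g₁ t with hF₁
  set F₂ : ℝ → ℝ := fun x => 0 + ∫ t in a..x, g₂ t with hF₂
  have hF₁conv : ConvexOn ℝ (Icc a b) F₁ :=
    (aux_convex_primitive hg₁c hg₁m _ a).subset (subset_univ _) (convex_Icc a b)
  have hF₂conv : ConvexOn ℝ (Icc a b) F₂ :=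
    (aux_convex_primitive hg₂c hg₂m _ a).subset (subset_univ _) (convex_Icc a b)
  -- `g₁ - g₂ = f'` on `[a, b]`
  have hgdiff : ∀ t ∈ Icc a b, g₁ t - g₂ t = f' t := by
    intro t ht
    have hsub : uIcc a t ⊆ Icc a b := by
      rw [uIcc_of_le ht.1]
      exact Icc_subset_Icc_right ht.2
    have h1 : (∫ u in a..t, p u) - ∫ u in a..t, q u = ∫ u in a..t, f'' u := by
      rw [← intervalIntegral.integral_sub hp_int.intervalIntegrable
          hq_int.intervalIntegrable]
      refine intervalIntegral.integral_congr (fun u hu => ?_)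
      have humem : u ∈ Icc a b := hsub hu
      simp only [hp, hq, Set.indicator_of_mem humem]
      exact max_zero_sub_max_neg_zero_eq_self _
    have := hf' t ht
    simp only [hg₁, hg₂, zero_add]
    linarith
  -- decomposition `f = F₁ - F₂` on `[a, b]`
  have hdecomp : ∀ x ∈ Icc a b, f x = F₁ x - F₂ x := by
    intro x hx
    have hsub : uIcc a x ⊆ Icc a b := by
      rw [uIcc_of_le hx.1]
      exact Icc_subset_Icc_right hx.2
    have h1 : (∫ t in a..x, g₁ t) - ∫ t in a..x, g₂ t = ∫ t in a..x, f' t := by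
      rw [← intervalIntegral.integral_sub (hg₁c.intervalIntegrable _ _)
          (hg₂c.intervalIntegrable _ _)]
      exact intervalIntegral.integral_congr (fun t ht => hgdiff t (hsub ht))
    have := hf x hx
    simp only [hF₁, hF₂, zero_add]
    linarith
  -- bound for F₂
  have hg₂ub : ∀ t, a ≤ t → g₂ t ≤ I₂ := by
    intro t ht
    have : (∫ u in a..t, q u) ≤ ∫ u, q u := by
      rw [intervalIntegral.integral_of_le ht]
      exact setIntegral_le_integral hq_int (ae_of_all _ hq_pos)
    simp only [hg₂, zero_add]
    linarith
  have hg₂lb : ∀ t, a ≤ t → 0 ≤ g₂ t := by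
    intro t ht
    simp only [hg₂, zero_add]
    exact intervalIntegral.integral_nonneg ht (fun u _ => hq_pos u)
  have hF₂bd : ∀ x ∈ Icc a b, |F₂ x| ≤ ℓ * I₂ := by
    intro x hx
    have key : ‖∫ t in a..x, g₂ t‖ ≤ I₂ * |x - a| := by
      refine intervalIntegral.norm_integral_le_of_norm_le_const (fun t ht => ?_)
      rw [Set.uIoc_of_le hx.1] at ht
      rw [Real.norm_eq_abs, abs_of_nonneg (hg₂lb t ht.1.le)]
      exact hg₂ub t ht.1.le
    have hxa : |x - a| ≤ ℓ := by
      rw [abs_of_nonneg (by linarith [hx.1])]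
      have := hx.2; linarith
    simp only [hF₂, zero_add]
    rw [← Real.norm_eq_abs]
    calc ‖∫ t in a..x, g₂ t‖ ≤ I₂ * |x - a| := key
      _ ≤ I₂ * ℓ := by nlinarith
      _ = ℓ * I₂ := mul_comm _ _
  -- integrability / continuity of f and f' on [a,b]
  have hf'cont : ContinuousOn f' (Icc a b) := by
    have : ContinuousOn (fun x => f' a + ∫ t in Ioc a x, f'' t) (Icc a b) :=
      continuousOn_const.add (intervalIntegral.continuousOn_primitive hint)
    refine ContinuousOn.congr this (fun x hx => ?_)
    rw [hf' x hx, intervalIntegral.integral_of_le hx.1]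
  have hf'int : IntegrableOn f' (Icc a b) := hf'cont.integrableOn_Icc
  have hfcont : ContinuousOn f (Icc a b) := by
    have : ContinuousOn (fun x => f a + ∫ t in Ioc a x, f' t) (Icc a b) :=
      continuousOn_const.add (intervalIntegral.continuousOn_primitive hf'int)
    refine ContinuousOn.congr this (fun x hx => ?_)
    rw [hf x hx, intervalIntegral.integral_of_le hx.1]
  have hfint : IntegrableOn f (Icc a b) := hfcont.integrableOn_Icc
  have hI₀0 : 0 ≤ I₀ := setIntegral_nonneg measurableSet_Icc (fun t _ => abs_nonneg _)
  have hI₁0 : 0 ≤ I₁ := setIntegral_nonneg measurableSet_Icc (fun t _ => abs_nonneg _)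
  have habs'int : IntegrableOn (fun t => |f' t|) (Icc a b) := hf'int.abs
  have habsfint : IntegrableOn (fun t => |f t|) (Icc a b) := hfint.abs
  -- sup bound for f on [a,b]
  have hosc : ∀ x ∈ Icc a b, ∀ y ∈ Icc a b, |f x - f y| ≤ I₁ := by
    intro x hx y hy
    have hsubx : uIcc y x ⊆ Icc a b := uIcc_subset_Icc hy hx
    have h1 : f x - f y = ∫ t in y..x, f' t := by
      have hadd : (∫ t in a..y, f' t) + ∫ t in y..x, f' t = ∫ t in a..x, f' t :=
        intervalIntegral.integral_add_adjacent_intervals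
          ((hf'int.mono (uIcc_subset_Icc (left_mem_Icc.2 hab') hy) le_rfl).intervalIntegrable)
          ((hf'int.mono hsubx le_rfl).intervalIntegrable)
      rw [hf x hx, hf y hy]
      linarith
    rw [h1, ← Real.norm_eq_abs]
    calc ‖∫ t in y..x, f' t‖ ≤ ∫ t in Set.uIoc y x, ‖f' t‖ :=
          intervalIntegral.norm_integral_le_integral_norm_uIoc
      _ ≤ ∫ t in Icc a b, ‖f' t‖ := by
          refine setIntegral_mono_set ?_ (ae_of_all _ (fun t => norm_nonneg _))
            (HasSubset.Subset.eventuallyLE ?_)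
          · simpa [Real.norm_eq_abs] using habs'int
          · exact (Set.uIoc_subset_uIcc).trans hsubx
      _ = I₁ := by simp [Real.norm_eq_abs, hI₁]
  have hvol : (volume (Icc a b)).toReal = ℓ := by
    rw [Real.volume_Icc, hab, ENNReal.toReal_ofReal hℓ.le]
  have hfsup : ∀ x ∈ Icc a b, |f x| ≤ I₀ / ℓ + I₁ := by
    intro x hx
    have h1 : ∫ (_ : ℝ) in Icc a b, |f x| = ℓ * |f x| := by
      rw [setIntegral_const, measureReal_def, hvol, smul_eq_mul]
    have h2 : (∫ (_ : ℝ) in Icc a b, |f x|) ≤ ∫ y in Icc a b, (|f y| + I₁) := by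
      refine setIntegral_mono_on (integrableOn_const ?_)
        (habsfint.add (integrableOn_const ?_)) measurableSet_Icc
        (fun y hy => ?_)
      · rw [Real.volume_Icc]; exact ENNReal.ofReal_ne_top
      · rw [Real.volume_Icc]; exact ENNReal.ofReal_ne_top
      · calc |f x| ≤ |f y| + |f x - f y| := by
              have := abs_sub_abs_le_abs_sub (f x) (f y); linarith [abs_sub_abs_le_abs_sub (f x) (f y)]
          _ ≤ |f y| + I₁ := by linarith [hosc x hx y hy]
    have h3 : (∫ y in Icc a b, (|f y| + I₁)) = I₀ + ℓ * I₁ := by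
      rw [integral_add habsfint (integrableOn_const (by
        rw [Real.volume_Icc]; exact ENNReal.ofReal_ne_top))]
      rw [setIntegral_const, measureReal_def, hvol, smul_eq_mul, hI₀]
    have : ℓ * |f x| ≤ I₀ + ℓ * I₁ := by rw [← h1]; linarith
    rw [div_add' _ _ _ hℓ.ne', le_div_iff₀ hℓ]
    nlinarith
  -- bound for F₁
  have hF₁bd : ∀ x ∈ Icc a b, |F₁ x| ≤ (I₀ / ℓ + I₁) + ℓ * I₂ := by
    intro x hx
    have h1 : F₁ x = f x + F₂ x := by have := hdecomp x hx; linarith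
    rw [h1]
    calc |f x + F₂ x| ≤ |f x| + |F₂ x| := abs_add_le _ _
      _ ≤ (I₀ / ℓ + I₁) + ℓ * I₂ := add_le_add (hfsup x hx) (hF₂bd x hx)
  refine ⟨⟨F₁, F₂, hF₁conv, hF₂conv, hdecomp⟩, ?_⟩
  have hmem : ENNReal.ofReal (((I₀ / ℓ + I₁) + ℓ * I₂) + ℓ * I₂) ∈
      {r : ℝ≥0∞ | ∃ (f₁ f₂ : ℝ → ℝ) (M₁ M₂ : ℝ),
        ConvexOn ℝ (Icc a b) f₁ ∧ ConvexOn ℝ (Icc a b) f₂ ∧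
        (∀ x ∈ Icc a b, f x = f₁ x - f₂ x) ∧
        (∀ x ∈ Icc a b, |f₁ x| ≤ M₁) ∧ (∀ x ∈ Icc a b, |f₂ x| ≤ M₂) ∧
        r = ENNReal.ofReal (M₁ + M₂)} :=
    ⟨F₁, F₂, (I₀ / ℓ + I₁) + ℓ * I₂, ℓ * I₂, hF₁conv, hF₂conv, hdecomp, hF₁bd, hF₂bd, rfl⟩
  refine le_trans (sInf_le hmem) (ENNReal.ofReal_le_ofReal ?_)
  have hC : ((I₀ / ℓ + I₁) + ℓ * I₂) + ℓ * I₂ ≤ (1/ℓ + 1 + 2*ℓ) * (I₀ + I₁ + I₂) := by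
    have h1 : I₀ / ℓ = (1/ℓ) * I₀ := by ring
    have hℓ' : 0 < 1/ℓ := by positivity
    nlinarith [mul_nonneg hℓ'.le hI₁0, mul_nonneg hℓ'.le hI₂0, mul_nonneg hℓ.le hI₀0,
      mul_nonneg hℓ.le hI₁0, mul_nonneg hℓ'.le hI₀0]
  exact hC
end

section
/- Let a ∈ C^{1,1}(S^{d−1}) and define f(x) = a(x/|x|)·|x| for x ≠ 0, f(0) = 0. Then f is a difference of two convex functions on ℝ^d, and there is a universal constant C such that ‖f‖_{DC(B_R)} ≤ C·R·‖a‖_{C^{1,1}} for all R > 0. -/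
open Set Metric
open scoped ENNReal

section
variable {E : Type*} [NormedAddCommGroup E] [InnerProductSpace ℝ E]

lemma norm_unit' {x : E} (hx : x ≠ 0) : ‖(‖x‖⁻¹ • x)‖ = 1 := by
  have hxn : ‖x‖ ≠ 0 := norm_ne_zero_iff.2 hx
  rw [norm_smul, Real.norm_eq_abs, abs_of_pos (by positivity : (0:ℝ) < ‖x‖⁻¹)]
  field_simp

lemma unit_lip {z w : E} (hz : z ≠ 0) (hw : w ≠ 0) :
    ‖‖z‖⁻¹ • z - ‖w‖⁻¹ • w‖ ≤ 2 / ‖z‖ * ‖z - w‖ := by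
  have hzn : (0:ℝ) < ‖z‖ := norm_pos_iff.2 hz
  have hwn : (0:ℝ) < ‖w‖ := norm_pos_iff.2 hw
  have hsplit : ‖z‖⁻¹ • z - ‖w‖⁻¹ • w = ‖z‖⁻¹ • (z - w) + (‖z‖⁻¹ - ‖w‖⁻¹) • w := by
    rw [smul_sub, sub_smul]; abel
  rw [hsplit]
  have h1 : ‖‖z‖⁻¹ • (z - w)‖ = ‖z‖⁻¹ * ‖z - w‖ := by
    rw [norm_smul, Real.norm_eq_abs, abs_of_pos (by positivity)]
  have habs : |‖w‖ - ‖z‖| ≤ ‖z - w‖ := by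
    rw [← norm_sub_rev]; exact abs_norm_sub_norm_le w z
  have h2 : ‖(‖z‖⁻¹ - ‖w‖⁻¹) • w‖ ≤ ‖z‖⁻¹ * ‖z - w‖ := by
    rw [norm_smul, Real.norm_eq_abs]
    have he : |‖z‖⁻¹ - ‖w‖⁻¹| * ‖w‖ = |‖w‖ - ‖z‖| / ‖z‖ := by
      rw [eq_div_iff hzn.ne', ← abs_of_pos hwn, ← abs_mul, ← abs_of_pos hzn, ← abs_mul]
      congr 1
      field_simp
      simp only [abs_of_pos hwn, abs_of_pos hzn]
      ring
    rw [he]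
    calc |‖w‖ - ‖z‖| / ‖z‖ ≤ ‖z - w‖ / ‖z‖ := by gcongr
      _ = ‖z‖⁻¹ * ‖z - w‖ := by rw [div_eq_inv_mul]
  calc ‖‖z‖⁻¹ • (z - w) + (‖z‖⁻¹ - ‖w‖⁻¹) • w‖ ≤ ‖‖z‖⁻¹ • (z - w)‖ + ‖(‖z‖⁻¹ - ‖w‖⁻¹) • w‖ :=
        norm_add_le _ _
    _ ≤ ‖z‖⁻¹ * ‖z - w‖ + ‖z‖⁻¹ * ‖z - w‖ := by rw [h1]; linarith [h2]
    _ = 2 / ‖z‖ * ‖z - w‖ := by field_simp; ring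

lemma hasFDerivAt_norm'' {x : E} (hx : x ≠ 0) :
    HasFDerivAt (fun y : E => ‖y‖) (innerSL ℝ (‖x‖⁻¹ • x)) x := by
  have hxn : ‖x‖ ≠ 0 := norm_ne_zero_iff.2 hx
  have h1 : HasFDerivAt (fun y : E => ‖y‖ ^ 2) (2 • innerSL ℝ x) x :=
    (hasStrictFDerivAt_norm_sq x).hasFDerivAt
  have h2 := (Real.hasDerivAt_sqrt (show ‖x‖ ^ 2 ≠ 0 by positivity)).comp_hasFDerivAt x h1
  have hfun : (fun y : E => Real.sqrt (‖y‖ ^ 2)) = fun y : E => ‖y‖ :=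
    funext fun y => by rw [Real.sqrt_sq (norm_nonneg y)]
  rw [← hfun]
  refine h2.congr_fderiv ?_
  ext y
  simp only [ContinuousLinearMap.smul_apply, innerSL_apply_apply, ContinuousLinearMap.coe_smul',
    Pi.smul_apply, real_inner_smul_left, smul_eq_mul]
  rw [Real.sqrt_sq (norm_nonneg x)]
  field_simp
  ring

lemma unit_smul_eq {t : ℝ} (ht : 0 < t) (x : E) : ‖t • x‖⁻¹ • (t • x) = ‖x‖⁻¹ • x := by
  rcases eq_or_ne x 0 with rfl | hx
  · simp
  have hxn : ‖x‖ ≠ 0 := norm_ne_zero_iff.2 hx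
  rw [norm_smul, Real.norm_eq_abs, abs_of_pos ht, smul_smul]
  have h : (t * ‖x‖)⁻¹ * t = ‖x‖⁻¹ := by field_simp
  rw [h]

variable {a : E → ℝ} {a' : E → E →L[ℝ] ℝ} {M : ℝ}

-- Euler: derivative of the 0-homogeneous extension annihilates the radial direction
lemma euler_aux (hd : ∀ x ∈ {y : E | 1 / 2 < ‖y‖ ∧ ‖y‖ < 2},
      HasFDerivAt (fun y : E => a (‖y‖⁻¹ • y)) (a' x) x)
    {w : E} (hw : ‖w‖ = 1) : a' w w = 0 := by
  have hwA : w ∈ {y : E | 1 / 2 < ‖y‖ ∧ ‖y‖ < 2} := by constructor <;> rw [hw] <;> norm_num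
  have hφ : HasDerivAt (fun t : ℝ => t • w) w 1 := by
    simpa using (hasDerivAt_id (1:ℝ)).smul_const w
  have h1 : HasDerivAt (fun t : ℝ => a (‖t • w‖⁻¹ • (t • w))) (a' w w) 1 := by
    have hd' : HasFDerivAt (fun y : E => a (‖y‖⁻¹ • y)) (a' w) ((1:ℝ) • w) := by
      simpa using hd w hwA
    have := hd'.comp_hasDerivAt 1 hφ
    exact this
  have heq : (fun t : ℝ => a (‖t • w‖⁻¹ • (t • w))) =ᶠ[nhds 1] fun _ => a (‖w‖⁻¹ • w) := by
    filter_upwards [eventually_gt_nhds (zero_lt_one)] with t ht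
    rw [unit_smul_eq ht]
  have h2 : HasDerivAt (fun _ : ℝ => a (‖w‖⁻¹ • w)) (a' w w) 1 := h1.congr_of_eventuallyEq heq.symm
  have h3 : HasDerivAt (fun _ : ℝ => a (‖w‖⁻¹ • w)) 0 1 := hasDerivAt_const _ _
  exact h2.unique h3


variable {a : E → ℝ} {a' : E → E →L[ℝ] ℝ} {M : ℝ}

lemma f_hasFDerivAt
    (hd : ∀ x ∈ {y : E | 1 / 2 < ‖y‖ ∧ ‖y‖ < 2},
      HasFDerivAt (fun y : E => a (‖y‖⁻¹ • y)) (a' x) x)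
    {z : E} (hz : z ∈ {y : E | 1 / 2 < ‖y‖ ∧ ‖y‖ < 2}) :
    HasFDerivAt (fun y : E => a (‖y‖⁻¹ • y) * ‖y‖)
      (a (‖z‖⁻¹ • z) • innerSL ℝ (‖z‖⁻¹ • z) + ‖z‖ • a' z) z := by
  have hz0 : z ≠ 0 := norm_pos_iff.1 (lt_trans (by norm_num) hz.1)
  exact (hd z hz).mul (hasFDerivAt_norm'' hz0)

set_option maxHeartbeats 1000000 in
lemma T_bound (hM : 0 ≤ M)
    (hd : ∀ x ∈ {y : E | 1 / 2 < ‖y‖ ∧ ‖y‖ < 2},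
      HasFDerivAt (fun y : E => a (‖y‖⁻¹ • y)) (a' x) x)
    (ha : ∀ x ∈ {y : E | 1 / 2 < ‖y‖ ∧ ‖y‖ < 2}, |a (‖x‖⁻¹ • x)| ≤ M)
    (ha' : ∀ x ∈ {y : E | 1 / 2 < ‖y‖ ∧ ‖y‖ < 2}, ‖a' x‖ ≤ M)
    (hlip : LipschitzOnWith M.toNNReal a' {y : E | 1 / 2 < ‖y‖ ∧ ‖y‖ < 2})
    {u w : E} (hu : ‖u‖ = 1) (hw : ‖w‖ = 1) :
    (a (‖w‖⁻¹ • w) • innerSL ℝ (‖w‖⁻¹ • w) + ‖w‖ • a' w) u - a (‖u‖⁻¹ • u)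
      ≤ 27 * M * ‖u - w‖ ^ 2 := by
  set Ann := {y : E | 1 / 2 < ‖y‖ ∧ ‖y‖ < 2} with hAnn
  set F' : E → E →L[ℝ] ℝ :=
    fun z => a (‖z‖⁻¹ • z) • innerSL ℝ (‖z‖⁻¹ • z) + ‖z‖ • a' z with hF'
  have huA : u ∈ Ann := by constructor <;> rw [hu] <;> norm_num
  have hwA : w ∈ Ann := by constructor <;> rw [hw] <;> norm_num
  have hu0 : u ≠ 0 := by intro h; rw [h, norm_zero] at hu; norm_num at hu
  have hw0 : w ≠ 0 := by intro h; rw [h, norm_zero] at hw; norm_num at hw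
  have hwhat : ‖w‖⁻¹ • w = w := by rw [hw, inv_one, one_smul]
  have huhat : ‖u‖⁻¹ • u = u := by rw [hu, inv_one, one_smul]
  have haw : |a w| ≤ M := by have := ha w hwA; rwa [hwhat] at this
  have hau : |a u| ≤ M := by have := ha u huA; rwa [huhat] at this
  -- value of F' w on u and on w
  have hFu : (F' w) u = a w * inner ℝ w u + a' w u := by
    simp only [hF', hwhat, hw, inv_one, one_smul, ContinuousLinearMap.add_apply,
      ContinuousLinearMap.smul_apply, innerSL_apply_apply, smul_eq_mul]
  have hinnerww : (inner ℝ w w : ℝ) = 1 := by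
    rw [real_inner_self_eq_norm_sq, hw]; norm_num
  have hFw : (F' w) w = a w := by
    simp only [hF', hwhat, hw, inv_one, one_smul, ContinuousLinearMap.add_apply,
      ContinuousLinearMap.smul_apply, innerSL_apply_apply, smul_eq_mul]
    have : a' w w = 0 := euler_aux hd hw
    rw [hinnerww, this]; ring
  by_cases hcase : ‖u - w‖ ≤ 1/3
  · -- near case: Taylor estimate along the segment
    have hws : w ∈ segment ℝ w u := left_mem_segment ℝ w u
    have hus : u ∈ segment ℝ w u := right_mem_segment ℝ w u
    have hseg : ∀ z ∈ segment ℝ w u, ‖z - w‖ ≤ ‖u - w‖ ∧ 2/3 ≤ ‖z‖ ∧ ‖z‖ ≤ 1 := by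
      rintro z ⟨p, q, hp, hq, hpq, rfl⟩
      have hzw : p • w + q • u - w = q • (u - w) := by
        have hp1 : p = 1 - q := by linarith
        rw [hp1, smul_sub, sub_smul, one_smul]; abel
      have hq1 : q ≤ 1 := by linarith
      have h1 : ‖p • w + q • u - w‖ ≤ ‖u - w‖ := by
        rw [hzw, norm_smul, Real.norm_eq_abs, abs_of_nonneg hq]
        nlinarith [norm_nonneg (u - w)]
      refine ⟨h1, ?_, ?_⟩
      · have h2 : ‖w‖ - ‖p • w + q • u‖ ≤ ‖w - (p • w + q • u)‖ := norm_sub_norm_le _ _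
        rw [norm_sub_rev] at h2
        have : ‖p • w + q • u - w‖ ≤ 1/3 := le_trans h1 hcase
        linarith [hw ▸ h2]
      · calc ‖p • w + q • u‖ ≤ ‖p • w‖ + ‖q • u‖ := norm_add_le _ _
          _ = p * ‖w‖ + q * ‖u‖ := by
            rw [norm_smul, norm_smul, Real.norm_eq_abs, Real.norm_eq_abs,
              abs_of_nonneg hp, abs_of_nonneg hq]
          _ = 1 := by rw [hu, hw]; linarith
    have hsubAnn : segment ℝ w u ⊆ Ann := by
      intro z hz
      obtain ⟨_, h23, h1⟩ := hseg z hz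
      simp only [hAnn, mem_setOf_eq]
      constructor <;> linarith
    have hlipF : ∀ z ∈ segment ℝ w u, ‖F' z - F' w‖ ≤ 6 * M * ‖u - w‖ := by
      intro z hzs
      obtain ⟨hzw, hz23, hz1⟩ := hseg z hzs
      have hzA : z ∈ Ann := hsubAnn hzs
      have hz0 : z ≠ 0 := norm_pos_iff.1 (by linarith)
      have hMzw : (0:ℝ) ≤ ‖z - w‖ := norm_nonneg _
      have hsplit : F' z - F' w =
          (a (‖z‖⁻¹ • z) • innerSL ℝ (‖z‖⁻¹ • z) - a (‖w‖⁻¹ • w) • innerSL ℝ (‖w‖⁻¹ • w))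
          + (‖z‖ • a' z - ‖w‖ • a' w) := by
        simp only [hF']; abel
      -- second part
      have hlz : ‖a' z - a' w‖ ≤ M * ‖z - w‖ := by
        have h := hlip.dist_le_mul z hzA w hwA
        rw [dist_eq_norm, dist_eq_norm] at h
        calc ‖a' z - a' w‖ ≤ (M.toNNReal : ℝ) * ‖z - w‖ := h
          _ = M * ‖z - w‖ := by rw [Real.coe_toNNReal M hM]
      have hb2 : ‖‖z‖ • a' z - ‖w‖ • a' w‖ ≤ 2 * M * ‖z - w‖ := by
        have hsplit2 : ‖z‖ • a' z - ‖w‖ • a' w = ‖z‖ • (a' z - a' w) + (‖z‖ - ‖w‖) • a' w := by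
          module
        rw [hsplit2]
        have e1 : ‖‖z‖ • (a' z - a' w)‖ ≤ M * ‖z - w‖ := by
          rw [norm_smul (‖z‖) (a' z - a' w), Real.norm_eq_abs, abs_of_nonneg (norm_nonneg z)]
          nlinarith [norm_nonneg (a' z - a' w), hlz]
        have e2 : ‖(‖z‖ - ‖w‖) • a' w‖ ≤ M * ‖z - w‖ := by
          rw [norm_smul (‖z‖ - ‖w‖) (a' w), Real.norm_eq_abs]
          have h1 : |‖z‖ - ‖w‖| ≤ ‖z - w‖ := abs_norm_sub_norm_le z w
          have h2 : ‖a' w‖ ≤ M := ha' w hwA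
          nlinarith [abs_nonneg (‖z‖ - ‖w‖), norm_nonneg (a' w)]
        calc ‖‖z‖ • (a' z - a' w) + (‖z‖ - ‖w‖) • a' w‖
            ≤ ‖‖z‖ • (a' z - a' w)‖ + ‖(‖z‖ - ‖w‖) • a' w‖ := norm_add_le _ _
          _ ≤ 2 * M * ‖z - w‖ := by linarith
      -- first part
      have hb1a : ‖innerSL ℝ (‖z‖⁻¹ • z) - innerSL ℝ (‖w‖⁻¹ • w)‖ ≤ 3 * ‖z - w‖ := by
        rw [← map_sub, innerSL_apply_norm]
        have h1 := unit_lip hz0 hw0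
        have h2 : 2 / ‖z‖ ≤ 3 := by
          rw [div_le_iff₀ (by linarith)]; linarith
        calc ‖‖z‖⁻¹ • z - ‖w‖⁻¹ • w‖ ≤ 2 / ‖z‖ * ‖z - w‖ := h1
          _ ≤ 3 * ‖z - w‖ := by nlinarith
      have hb1b : |a (‖z‖⁻¹ • z) - a (‖w‖⁻¹ • w)| ≤ M * ‖z - w‖ := by
        have h := (convex_segment w u).norm_image_sub_le_of_norm_hasFDerivWithin_le
          (fun y hy => (hd y (hsubAnn hy)).hasFDerivWithinAt)
          (fun y hy => ha' y (hsubAnn hy)) hws hzs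
        rwa [Real.norm_eq_abs] at h
      have hb1 : ‖a (‖z‖⁻¹ • z) • innerSL ℝ (‖z‖⁻¹ • z) - a (‖w‖⁻¹ • w) • innerSL ℝ (‖w‖⁻¹ • w)‖
          ≤ 4 * M * ‖z - w‖ := by
        have hsplit1 : a (‖z‖⁻¹ • z) • innerSL ℝ (‖z‖⁻¹ • z)
              - a (‖w‖⁻¹ • w) • innerSL ℝ (‖w‖⁻¹ • w)
            = a (‖z‖⁻¹ • z) • (innerSL ℝ (‖z‖⁻¹ • z) - innerSL ℝ (‖w‖⁻¹ • w))
              + (a (‖z‖⁻¹ • z) - a (‖w‖⁻¹ • w)) • innerSL ℝ (‖w‖⁻¹ • w) := by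
          rw [smul_sub, sub_smul]; abel
        rw [hsplit1]
        have haz : |a (‖z‖⁻¹ • z)| ≤ M := ha z hzA
        have e1 : ‖a (‖z‖⁻¹ • z) • (innerSL ℝ (‖z‖⁻¹ • z) - innerSL ℝ (‖w‖⁻¹ • w))‖
            ≤ 3 * M * ‖z - w‖ := by
          rw [norm_smul (a (‖z‖⁻¹ • z)) (innerSL ℝ (‖z‖⁻¹ • z) - innerSL ℝ (‖w‖⁻¹ • w)),
            Real.norm_eq_abs]
          nlinarith [abs_nonneg (a (‖z‖⁻¹ • z)),
            norm_nonneg (innerSL ℝ (‖z‖⁻¹ • z) - innerSL ℝ (‖w‖⁻¹ • w))]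
        have e2 : ‖(a (‖z‖⁻¹ • z) - a (‖w‖⁻¹ • w)) • innerSL ℝ (‖w‖⁻¹ • w)‖ ≤ M * ‖z - w‖ := by
          rw [norm_smul (a (‖z‖⁻¹ • z) - a (‖w‖⁻¹ • w)) (innerSL ℝ (‖w‖⁻¹ • w)),
            Real.norm_eq_abs, innerSL_apply_norm, norm_unit' hw0, mul_one]
          exact hb1b
        calc ‖a (‖z‖⁻¹ • z) • (innerSL ℝ (‖z‖⁻¹ • z) - innerSL ℝ (‖w‖⁻¹ • w))
              + (a (‖z‖⁻¹ • z) - a (‖w‖⁻¹ • w)) • innerSL ℝ (‖w‖⁻¹ • w)‖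
            ≤ ‖a (‖z‖⁻¹ • z) • (innerSL ℝ (‖z‖⁻¹ • z) - innerSL ℝ (‖w‖⁻¹ • w))‖
              + ‖(a (‖z‖⁻¹ • z) - a (‖w‖⁻¹ • w)) • innerSL ℝ (‖w‖⁻¹ • w)‖ := norm_add_le _ _
          _ ≤ 4 * M * ‖z - w‖ := by linarith
      calc ‖F' z - F' w‖ = ‖(a (‖z‖⁻¹ • z) • innerSL ℝ (‖z‖⁻¹ • z)
              - a (‖w‖⁻¹ • w) • innerSL ℝ (‖w‖⁻¹ • w)) + (‖z‖ • a' z - ‖w‖ • a' w)‖ := by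
            rw [hsplit]
        _ ≤ ‖a (‖z‖⁻¹ • z) • innerSL ℝ (‖z‖⁻¹ • z) - a (‖w‖⁻¹ • w) • innerSL ℝ (‖w‖⁻¹ • w)‖
              + ‖‖z‖ • a' z - ‖w‖ • a' w‖ := norm_add_le _ _
        _ ≤ 6 * M * ‖z - w‖ := by linarith
        _ ≤ 6 * M * ‖u - w‖ := by nlinarith
    have htaylor := (convex_segment w u).norm_image_sub_le_of_norm_hasFDerivWithin_le'
      (fun z hz => (f_hasFDerivAt hd (hsubAnn hz)).hasFDerivWithinAt) hlipF hws hus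
    have hfu : a (‖u‖⁻¹ • u) * ‖u‖ = a u := by rw [huhat, hu, mul_one]
    have hfw : a (‖w‖⁻¹ • w) * ‖w‖ = a w := by rw [hwhat, hw, mul_one]
    rw [hfu, hfw, map_sub, hFw, Real.norm_eq_abs] at htaylor
    have h2 := (abs_le.1 htaylor).1
    have hsq : (0:ℝ) ≤ M * ‖u - w‖^2 := by positivity
    have hgoal : (F' w) u - a (‖u‖⁻¹ • u) ≤ 27 * M * ‖u - w‖ ^ 2 := by
      rw [huhat]
      nlinarith [sq_abs (‖u - w‖), norm_nonneg (u - w)]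
    exact hgoal
  · push_neg at hcase
    have h1 : |(inner ℝ w u : ℝ)| ≤ 1 := by
      have := abs_real_inner_le_norm w u
      rw [hu, hw] at this; linarith
    have h2 : |a' w u| ≤ M := by
      have := (a' w).le_opNorm u
      rw [hu, mul_one] at this
      calc |a' w u| ≤ ‖a' w‖ := this
        _ ≤ M := ha' w hwA
    have hgoal : (F' w) u - a (‖u‖⁻¹ • u) ≤ 27 * M * ‖u - w‖ ^ 2 := by
      rw [hFu, huhat]
      have p1 : a w * inner ℝ w u ≤ M := by
        calc a w * inner ℝ w u ≤ |a w * inner ℝ w u| := le_abs_self _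
          _ = |a w| * |(inner ℝ w u : ℝ)| := abs_mul _ _
          _ ≤ M * 1 := mul_le_mul haw h1 (abs_nonneg _) hM
          _ = M := mul_one M
      have hb : a w * inner ℝ w u + a' w u - a u ≤ 3 * M := by
        linarith [(abs_le.1 h2).2, (abs_le.1 hau).1]
      have hsq : (1:ℝ)/9 ≤ ‖u - w‖ ^ 2 := by nlinarith only [hcase, norm_nonneg (u - w)]
      have hc : 3 * M ≤ 27 * M * ‖u - w‖ ^ 2 := by nlinarith only [hM, hsq]
      linarith only [hb, hc]
    exact hgoal

lemma absA_le (ha : ∀ x ∈ {y : E | 1 / 2 < ‖y‖ ∧ ‖y‖ < 2}, |a (‖x‖⁻¹ • x)| ≤ M)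
    {x : E} (hx : x ≠ 0) : |a (‖x‖⁻¹ • x)| ≤ M := by
  have h1 : ‖(‖x‖⁻¹ • x)‖ = 1 := norm_unit' hx
  have hin : (‖x‖⁻¹ • x) ∈ {y : E | 1 / 2 < ‖y‖ ∧ ‖y‖ < 2} := by
    constructor <;> rw [h1] <;> norm_num
  have h2 := ha _ hin
  rwa [h1, inv_one, one_smul] at h2

set_option maxHeartbeats 1000000 in
lemma f_subadd (hM : 0 ≤ M)
    (hd : ∀ x ∈ {y : E | 1 / 2 < ‖y‖ ∧ ‖y‖ < 2},
      HasFDerivAt (fun y : E => a (‖y‖⁻¹ • y)) (a' x) x)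
    (ha : ∀ x ∈ {y : E | 1 / 2 < ‖y‖ ∧ ‖y‖ < 2}, |a (‖x‖⁻¹ • x)| ≤ M)
    (ha' : ∀ x ∈ {y : E | 1 / 2 < ‖y‖ ∧ ‖y‖ < 2}, ‖a' x‖ ≤ M)
    (hlip : LipschitzOnWith M.toNNReal a' {y : E | 1 / 2 < ‖y‖ ∧ ‖y‖ < 2})
    (x y : E) :
    a (‖x + y‖⁻¹ • (x + y)) * ‖x + y‖
      ≤ a (‖x‖⁻¹ • x) * ‖x‖ + a (‖y‖⁻¹ • y) * ‖y‖ + 54 * M * (‖x‖ + ‖y‖ - ‖x + y‖) := by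
  rcases eq_or_ne x 0 with rfl | hx0
  · simp
  rcases eq_or_ne y 0 with rfl | hy0
  · simp
  rcases eq_or_ne (x + y) 0 with hxy | hxy
  · rw [hxy]
    simp only [norm_zero, mul_zero, sub_zero]
    have h1 : -M * ‖x‖ ≤ a (‖x‖⁻¹ • x) * ‖x‖ := by
      have := (abs_le.1 (absA_le ha hx0)).1
      nlinarith only [this, norm_nonneg x, (abs_le.1 (absA_le ha hx0)).1]
    have h2 : -M * ‖y‖ ≤ a (‖y‖⁻¹ • y) * ‖y‖ := by
      nlinarith only [(abs_le.1 (absA_le ha hy0)).1, norm_nonneg y]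
    nlinarith only [h1, h2, norm_nonneg x, norm_nonneg y, hM,
      mul_nonneg (mul_nonneg hM (norm_nonneg x)) (norm_nonneg y)]
  -- main case
  have hxn : (0:ℝ) < ‖x‖ := norm_pos_iff.2 hx0
  have hyn : (0:ℝ) < ‖y‖ := norm_pos_iff.2 hy0
  have hxyn : (0:ℝ) < ‖x + y‖ := norm_pos_iff.2 hxy
  set u := ‖x‖⁻¹ • x with hu_def
  set v := ‖y‖⁻¹ • y with hv_def
  set w := ‖x + y‖⁻¹ • (x + y) with hw_def
  have hu : ‖u‖ = 1 := norm_unit' hx0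
  have hv : ‖v‖ = 1 := norm_unit' hy0
  have hw : ‖w‖ = 1 := norm_unit' hxy
  have hxu : x = ‖x‖ • u := by
    rw [hu_def, smul_smul, mul_inv_cancel₀ hxn.ne', one_smul]
  have hyv : y = ‖y‖ • v := by
    rw [hv_def, smul_smul, mul_inv_cancel₀ hyn.ne', one_smul]
  have hxyw : x + y = ‖x + y‖ • w := by
    rw [hw_def, smul_smul, mul_inv_cancel₀ hxyn.ne', one_smul]
  have hwhat : ‖w‖⁻¹ • w = w := by rw [hw, inv_one, one_smul]
  have huhat : ‖u‖⁻¹ • u = u := by rw [hu, inv_one, one_smul]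
  have hvhat : ‖v‖⁻¹ • v = v := by rw [hv, inv_one, one_smul]
  -- T bounds
  have Tu := T_bound hM hd ha ha' hlip hu hw
  have Tv := T_bound hM hd ha ha' hlip hv hw
  rw [hwhat, huhat, hw] at Tu
  rw [hwhat, hvhat, hw] at Tv
  simp only [ContinuousLinearMap.add_apply, ContinuousLinearMap.smul_apply, innerSL_apply_apply,
    smul_eq_mul, one_smul] at Tu Tv
  -- Tu : a w * inner ℝ w u + a' w u - a u ≤ 27 * M * ‖u - w‖ ^ 2
  -- Euler
  have heuler : a' w w = 0 := euler_aux hd hw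
  -- expansion of a w * ‖x + y‖
  have hinner_xyw : (inner ℝ (x + y) w : ℝ) = ‖x + y‖ := by
    rw [hw_def, real_inner_smul_right, real_inner_self_eq_norm_sq]
    field_simp
  have hinner_xw : (inner ℝ x w : ℝ) = ‖x‖ * inner ℝ u w := by
    conv_lhs => rw [hxu]
    rw [real_inner_smul_left]
  have hinner_yw : (inner ℝ y w : ℝ) = ‖y‖ * inner ℝ v w := by
    conv_lhs => rw [hyv]
    rw [real_inner_smul_left]
  have ha'xy : a' w x + a' w y = 0 := by
    have : a' w (x + y) = ‖x + y‖ * a' w w := by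
      conv_lhs => rw [hxyw]
      rw [map_smul, smul_eq_mul]
    rw [← map_add]
    rw [this, heuler, mul_zero]
  have ha'x : a' w x = ‖x‖ * a' w u := by
    conv_lhs => rw [hxu]
    rw [map_smul, smul_eq_mul]
  have ha'y : a' w y = ‖y‖ * a' w v := by
    conv_lhs => rw [hyv]
    rw [map_smul, smul_eq_mul]
  -- geometric identity
  have hnsq_u : ‖u - w‖ ^ 2 = 2 - 2 * inner ℝ u w := by
    rw [norm_sub_sq_real, hu, hw]; ring
  have hnsq_v : ‖v - w‖ ^ 2 = 2 - 2 * inner ℝ v w := by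
    rw [norm_sub_sq_real, hv, hw]; ring
  have hinner_sum : (inner ℝ x w : ℝ) + inner ℝ y w = ‖x + y‖ := by
    rw [← inner_add_left, hinner_xyw]
  have hgeom : ‖x‖ * ‖u - w‖ ^ 2 + ‖y‖ * ‖v - w‖ ^ 2 = 2 * (‖x‖ + ‖y‖ - ‖x + y‖) := by
    rw [hnsq_u, hnsq_v]
    have h1 : (inner ℝ x w : ℝ) = ‖x‖ * inner ℝ u w := hinner_xw
    have h2 : (inner ℝ y w : ℝ) = ‖y‖ * inner ℝ v w := hinner_yw
    nlinarith only [h1, h2, hinner_sum]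
  -- symmetry of inner
  have hsym_u : (inner ℝ w u : ℝ) = inner ℝ u w := real_inner_comm u w
  have hsym_v : (inner ℝ w v : ℝ) = inner ℝ v w := real_inner_comm v w
  -- combine
  have hexp : a w * ‖x + y‖
      = ‖x‖ * (a w * inner ℝ w u + a' w u) + ‖y‖ * (a w * inner ℝ w v + a' w v) := by
    have : a w * ‖x + y‖ = a w * (inner ℝ x w + inner ℝ y w) := by rw [hinner_sum]
    rw [this, hinner_xw, hinner_yw, hsym_u, hsym_v]
    have hx' : a' w x = ‖x‖ * a' w u := ha'x
    have hy' : a' w y = ‖y‖ * a' w v := ha'y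
    nlinarith only [ha'xy, hx', hy']
  have hTu' : ‖x‖ * (a w * inner ℝ w u + a' w u)
      ≤ ‖x‖ * (a u + 27 * M * ‖u - w‖ ^ 2) :=
    mul_le_mul_of_nonneg_left (by linarith only [Tu]) (norm_nonneg x)
  have hTv' : ‖y‖ * (a w * inner ℝ w v + a' w v)
      ≤ ‖y‖ * (a v + 27 * M * ‖v - w‖ ^ 2) :=
    mul_le_mul_of_nonneg_left (by linarith only [Tv]) (norm_nonneg y)
  have hfinal : a w * ‖x + y‖ ≤ ‖x‖ * a u + ‖y‖ * a v
      + 27 * M * (‖x‖ * ‖u - w‖ ^ 2 + ‖y‖ * ‖v - w‖ ^ 2) := by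
    rw [hexp]
    nlinarith only [hTu', hTv']
  rw [hgeom] at hfinal
  -- rewrite goal in terms of u v w
  calc a w * ‖x + y‖ ≤ ‖x‖ * a u + ‖y‖ * a v + 27 * M * (2 * (‖x‖ + ‖y‖ - ‖x + y‖)) := hfinal
    _ = a u * ‖x‖ + a v * ‖y‖ + 54 * M * (‖x‖ + ‖y‖ - ‖x + y‖) := by ring


lemma g_convexOn (hM : 0 ≤ M)
    (hd : ∀ x ∈ {y : E | 1 / 2 < ‖y‖ ∧ ‖y‖ < 2},
      HasFDerivAt (fun y : E => a (‖y‖⁻¹ • y)) (a' x) x)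
    (ha : ∀ x ∈ {y : E | 1 / 2 < ‖y‖ ∧ ‖y‖ < 2}, |a (‖x‖⁻¹ • x)| ≤ M)
    (ha' : ∀ x ∈ {y : E | 1 / 2 < ‖y‖ ∧ ‖y‖ < 2}, ‖a' x‖ ≤ M)
    (hlip : LipschitzOnWith M.toNNReal a' {y : E | 1 / 2 < ‖y‖ ∧ ‖y‖ < 2}) :
    ConvexOn ℝ Set.univ (fun x : E => a (‖x‖⁻¹ • x) * ‖x‖ + 54 * M * ‖x‖) := by
  set g : E → ℝ := fun x => a (‖x‖⁻¹ • x) * ‖x‖ + 54 * M * ‖x‖ with hg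
  have homog : ∀ (c : ℝ), 0 ≤ c → ∀ z : E, g (c • z) = c * g z := by
    intro c hc z
    rcases eq_or_lt_of_le hc with rfl | hc
    · simp [hg]
    · rw [hg]
      simp only
      rw [unit_smul_eq hc, norm_smul, Real.norm_eq_abs, abs_of_pos hc]
      ring
  have hsub : ∀ s t : E, g (s + t) ≤ g s + g t := by
    intro s t
    have h := f_subadd hM hd ha ha' hlip s t
    have hexp : 54 * M * (‖s‖ + ‖t‖ - ‖s + t‖)
        = 54 * M * ‖s‖ + 54 * M * ‖t‖ - 54 * M * ‖s + t‖ := by ring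
    rw [hexp] at h
    rw [hg]
    simp only
    linarith only [h]
  refine ⟨convex_univ, ?_⟩
  intro x _ y _ p q hp hq hpq
  calc g (p • x + q • y) ≤ g (p • x) + g (q • y) := hsub _ _
    _ = p * g x + q * g y := by rw [homog p hp x, homog q hq y]
    _ = p • g x + q • g y := by simp [smul_eq_mul]

lemma norm_convexOn' (c : ℝ) (hc : 0 ≤ c) :
    ConvexOn ℝ Set.univ (fun x : E => c * ‖x‖) := by
  have h := (convexOn_univ_norm (E := E)).smul hc
  exact h

lemma habs_f (ha : ∀ x ∈ {y : E | 1 / 2 < ‖y‖ ∧ ‖y‖ < 2}, |a (‖x‖⁻¹ • x)| ≤ M) (hM : 0 ≤ M)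
    (x : E) : |a (‖x‖⁻¹ • x) * ‖x‖| ≤ M * ‖x‖ := by
  rcases eq_or_ne x 0 with rfl | hx
  · simp
  · rw [abs_mul, abs_norm]
    exact mul_le_mul_of_nonneg_right (absA_le ha hx) (norm_nonneg x)

end


/-- For `a ∈ C^{1,1}(S^{d−1})`, the positively `1`-homogeneous function
`f(x) = a(x/|x|)|x|` (with `f(0) = 0`) is a difference of two convex functions on `ℝ^d`, and
`‖f‖_{DC(B_R)} ≤ C R ‖a‖_{C^{1,1}}` for a universal constant `C` and all `R > 0`.
The `C^{1,1}` character of `a` on the sphere is expressed through its `0`-homogeneous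
extension `A(x) = a(x/|x|)` on the annulus `{1/2 < |x| < 2}`: `M` bounds `|A|`, `‖DA‖` and the
Lipschitz constant of `DA` there. -/
theorem stmt12 :
    ∃ C : ℝ, 0 < C ∧
      ∀ (d : ℕ) (a : EuclideanSpace ℝ (Fin d) → ℝ)
        (a' : EuclideanSpace ℝ (Fin d) → EuclideanSpace ℝ (Fin d) →L[ℝ] ℝ) (M : ℝ),
        0 ≤ M →
        (∀ x ∈ {y : EuclideanSpace ℝ (Fin d) | 1 / 2 < ‖y‖ ∧ ‖y‖ < 2},
          HasFDerivAt (fun y : EuclideanSpace ℝ (Fin d) => a (‖y‖⁻¹ • y)) (a' x) x) →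
        (∀ x ∈ {y : EuclideanSpace ℝ (Fin d) | 1 / 2 < ‖y‖ ∧ ‖y‖ < 2},
          |a (‖x‖⁻¹ • x)| ≤ M) →
        (∀ x ∈ {y : EuclideanSpace ℝ (Fin d) | 1 / 2 < ‖y‖ ∧ ‖y‖ < 2}, ‖a' x‖ ≤ M) →
        LipschitzOnWith M.toNNReal a' {y : EuclideanSpace ℝ (Fin d) | 1 / 2 < ‖y‖ ∧ ‖y‖ < 2} →
        (∃ f₁ f₂ : EuclideanSpace ℝ (Fin d) → ℝ,
          ConvexOn ℝ univ f₁ ∧ ConvexOn ℝ univ f₂ ∧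
          ∀ x, a (‖x‖⁻¹ • x) * ‖x‖ = f₁ x - f₂ x) ∧
        ∀ R : ℝ, 0 < R →
          dcNorm (ball (0 : EuclideanSpace ℝ (Fin d)) R)
              (fun x => a (‖x‖⁻¹ • x) * ‖x‖)
            ≤ ENNReal.ofReal (C * R * M) := by
  refine ⟨109, by norm_num, ?_⟩
  intro d a a' M hM hd ha ha' hlip
  have hg := g_convexOn hM hd ha ha' hlip
  have hn : ConvexOn ℝ Set.univ (fun x : EuclideanSpace ℝ (Fin d) => 54 * M * ‖x‖) :=
    norm_convexOn' (54 * M) (by linarith)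
  constructor
  · exact ⟨fun x => a (‖x‖⁻¹ • x) * ‖x‖ + 54 * M * ‖x‖, fun x => 54 * M * ‖x‖, hg, hn,
      fun x => by ring⟩
  · intro R hR
    apply sInf_le
    refine ⟨fun x => a (‖x‖⁻¹ • x) * ‖x‖ + 54 * M * ‖x‖, fun x => 54 * M * ‖x‖,
      55 * M * R, 54 * M * R,
      hg.subset (subset_univ _) (convex_ball _ _),
      hn.subset (subset_univ _) (convex_ball _ _),
      fun x _ => by ring, ?_, ?_, ?_⟩
    · intro x hx
      rw [mem_ball_zero_iff] at hx
      have h1 := habs_f ha hM x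
      have h2 : |a (‖x‖⁻¹ • x) * ‖x‖ + 54 * M * ‖x‖|
          ≤ |a (‖x‖⁻¹ • x) * ‖x‖| + |54 * M * ‖x‖| := abs_add_le _ _
      have h3 : |54 * M * ‖x‖| = 54 * M * ‖x‖ := abs_of_nonneg (by positivity)
      have h4 : M * ‖x‖ ≤ M * R := mul_le_mul_of_nonneg_left hx.le hM
      nlinarith only [h1, h2, h3, h4, norm_nonneg x, hM, hx]
    · intro x hx
      rw [mem_ball_zero_iff] at hx
      have h3 : |54 * M * ‖x‖| = 54 * M * ‖x‖ := abs_of_nonneg (by positivity)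
      have h4 : M * ‖x‖ ≤ M * R := mul_le_mul_of_nonneg_left hx.le hM
      nlinarith only [h3, h4]
    · congr 1
      ring
end

section
/- There exist universal constants 0 < c < C such that for all bounded continuous f : ℝ^d → ℝ and all t ≥ 1: c(‖f‖_∞ + t·sup_{|y|≤t^{−1/2}} ‖Δ²_y f‖_∞) ≤ K(t, f, C^{1,1}(ℝ^d), C_b(ℝ^d)) ≤ C(‖f‖_∞ + t·sup_{|y|≤t^{−1/2}} ‖Δ²_y f‖_∞). -/
open Set

open MeasureTheory Metric ContinuousLinearMap Convolution in
private lemma conv_repr14 {d : ℕ} {W : Type*} [NormedAddCommGroup W] [NormedSpace ℝ W]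
    (u : EuclideanSpace ℝ (Fin d) → ℝ) (k : EuclideanSpace ℝ (Fin d) → W)
    (L : ℝ →L[ℝ] W →L[ℝ] W) (hL : ∀ (a : ℝ) (m : W), L a m = a • m)
    (x : EuclideanSpace ℝ (Fin d)) : (u ⋆[L, volume] k) x = ∫ y, u (x - y) • k y := by
  rw [convolution_def]
  simp only [hL]
  have := integral_sub_left_eq_self (fun t => u t • k (x - t)) volume x
  simpa [sub_sub_cancel] using this.symm

open MeasureTheory Metric ContinuousLinearMap Convolution in
private lemma my_integral_fderiv_zero14 {d : ℕ} {W : Type*} [NormedAddCommGroup W]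
    [NormedSpace ℝ W] [CompleteSpace W]
    {w : EuclideanSpace ℝ (Fin d) → W} (hw : ContDiff ℝ 1 w) (hcw : HasCompactSupport w) :
    ∫ y, fderiv ℝ w y = 0 := by
  set L : ℝ →L[ℝ] W →L[ℝ] W := ContinuousLinearMap.lsmul ℝ ℝ
  have h1 := hcw.hasFDerivAt_convolution_right (μ := volume) L
    (locallyIntegrable_const (1:ℝ)) hw 0
  have h2 : ((fun _ : EuclideanSpace ℝ (Fin d) => (1:ℝ)) ⋆[L, volume] w) = fun _ => ∫ y, w y := by
    funext x
    rw [convolution_def]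
    simp only [L, ContinuousLinearMap.lsmul_apply, one_smul]
    exact integral_sub_left_eq_self w volume x
  rw [h2] at h1
  have h4 := (hasFDerivAt_const (∫ y, w y) (0:EuclideanSpace ℝ (Fin d))).unique h1
  rw [convolution_def] at h4
  have h5 : (fun t : EuclideanSpace ℝ (Fin d) =>
      (L.precompR (EuclideanSpace ℝ (Fin d))) (1:ℝ) (fderiv ℝ w ((0:EuclideanSpace ℝ (Fin d)) - t)))
      = fun t => fderiv ℝ w (0 - t) := by
    funext t; ext v; simp [ContinuousLinearMap.precompR_apply, L]
  rw [h5] at h4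
  rw [integral_sub_left_eq_self (fderiv ℝ w) volume 0] at h4
  exact h4.symm

open MeasureTheory Metric ContinuousLinearMap Convolution in
private lemma fderiv_flip14 {d : ℕ} {W : Type*} [NormedAddCommGroup W] [NormedSpace ℝ W]
    (w : EuclideanSpace ℝ (Fin d) → W) (w' : EuclideanSpace ℝ (Fin d) → EuclideanSpace ℝ (Fin d) →L[ℝ] W)
    (hw : ∀ x, HasFDerivAt w (w' x) x)
    (s : ℝ) (hsym : ∀ x, w (-x) = s • w x) :
    ∀ (x v : EuclideanSpace ℝ (Fin d)), w' (-x) v = s • w' x (-v) := by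
  intro x v
  have hneg : HasFDerivAt (fun y : EuclideanSpace ℝ (Fin d) => -y)
      (-(ContinuousLinearMap.id ℝ (EuclideanSpace ℝ (Fin d)))) x := (hasFDerivAt_id x).neg
  have h1 : HasFDerivAt (fun y : EuclideanSpace ℝ (Fin d) => w (-y))
      ((w' (-x)).comp (-(ContinuousLinearMap.id ℝ (EuclideanSpace ℝ (Fin d))))) x :=
    (hw (-x)).comp x hneg
  have h2 : HasFDerivAt (fun y : EuclideanSpace ℝ (Fin d) => w (-y)) (s • w' x) x := by
    have := (hw x).const_smul s
    refine this.congr_of_eventuallyEq (Filter.Eventually.of_forall fun y => ?_)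
    simp [hsym]
  have h3 := h1.unique h2
  have := congrArg (fun (T : EuclideanSpace ℝ (Fin d) →L[ℝ] W) => T (-v)) h3
  simpa using this

open MeasureTheory Metric ContinuousLinearMap Convolution in
private lemma second_diff_bound14 {d : ℕ} {W : Type*} [NormedAddCommGroup W] [NormedSpace ℝ W]
    [CompleteSpace W]
    (u : EuclideanSpace ℝ (Fin d) → ℝ) (hu : Continuous u)
    (k : EuclideanSpace ℝ (Fin d) → W) (hk : Continuous k)
    (hks : ∀ y : EuclideanSpace ℝ (Fin d), k y ≠ 0 → ‖y‖ ≤ 1)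
    (hke : ∀ y : EuclideanSpace ℝ (Fin d), k (-y) = k y)
    (ω : ℝ) (hω : ∀ (x y : EuclideanSpace ℝ (Fin d)), ‖y‖ ≤ 1 →
      |u (x + y) + u (x - y) - 2 * u x| ≤ ω) (x : EuclideanSpace ℝ (Fin d)) :
    ‖(∫ y, u (x - y) • k y) - u x • ∫ y, k y‖ ≤ ω / 2 * ∫ y, ‖k y‖ := by
  have hkc : HasCompactSupport k := by
    apply HasCompactSupport.of_support_subset_isCompact
      (isCompact_closedBall (0:EuclideanSpace ℝ (Fin d)) 1)
    intro y hy
    exact mem_closedBall_zero_iff.mpr (hks y hy)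
  have Ik : Integrable k volume := hk.integrable_of_hasCompactSupport hkc
  have Ikn : Integrable (fun y => ‖k y‖) volume := Ik.norm
  have cont_sub : Continuous fun y : EuclideanSpace ℝ (Fin d) => u (x - y) • k y :=
    (hu.comp (continuous_const.sub continuous_id)).smul hk
  have cont_add : Continuous fun y : EuclideanSpace ℝ (Fin d) => u (x + y) • k y :=
    (hu.comp (continuous_const.add continuous_id)).smul hk
  have Isub : Integrable (fun y => u (x - y) • k y) volume :=
    cont_sub.integrable_of_hasCompactSupport (hkc.smul_left)
  have Iadd : Integrable (fun y => u (x + y) • k y) volume :=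
    cont_add.integrable_of_hasCompactSupport (hkc.smul_left)
  have Icon : Integrable (fun y => (2 * u x) • k y) volume := Ik.smul _
  have flip : (∫ y, u (x + y) • k y) = ∫ y, u (x - y) • k y := by
    have h := integral_neg_eq_self (fun y : EuclideanSpace ℝ (Fin d) => u (x + y) • k y) volume
    calc (∫ y, u (x + y) • k y) = ∫ y, u (x + -y) • k (-y) := h.symm
    _ = ∫ y, u (x - y) • k y := by
        congr 1; funext y; rw [hke, sub_eq_add_neg]
  have key : (∫ y, (u (x + y) + u (x - y) - 2 * u x) • k y)
      = (2:ℝ) • ((∫ y, u (x - y) • k y) - u x • ∫ y, k y) := by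
    have expand : (fun y => (u (x + y) + u (x - y) - 2 * u x) • k y)
        = fun y => (u (x + y) • k y + u (x - y) • k y) - (2 * u x) • k y := by
      funext y; rw [sub_smul, add_smul]
    have Iadd2 : Integrable (fun y => u (x + y) • k y + u (x - y) • k y) volume := Iadd.add Isub
    rw [expand, integral_sub Iadd2 Icon, integral_add Iadd Isub, flip, integral_smul]
    rw [two_smul]
    module
  have bound : ‖∫ y, (u (x + y) + u (x - y) - 2 * u x) • k y‖ ≤ ω * ∫ y, ‖k y‖ := by
    rw [← integral_const_mul]
    apply norm_integral_le_of_norm_le (Ikn.const_mul ω)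
    apply Filter.Eventually.of_forall
    intro y
    rw [norm_smul]
    by_cases hy : k y = 0
    · simp [hy]
    · exact mul_le_mul_of_nonneg_right (by simpa using hω x y (hks y hy)) (norm_nonneg _)
  rw [key] at bound
  rw [norm_smul] at bound
  simp only [Real.norm_ofNat] at bound
  linarith

/-- The `K`-functional between `C^{1,1}(ℝ^d)` (norm `‖g‖_∞ + ‖Dg‖_∞ + Lip(Dg)`) and
`C_b(ℝ^d)` (sup norm): `K(t,f) = inf { ‖g‖_{C^{1,1}} + t ‖f − g‖_∞ }`. -/
noncomputable def K14 {d : ℕ} (t : ℝ) (f : EuclideanSpace ℝ (Fin d) → ℝ) : ℝ :=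
  sInf {r : ℝ | ∃ (g : EuclideanSpace ℝ (Fin d) → ℝ)
      (g' : EuclideanSpace ℝ (Fin d) → EuclideanSpace ℝ (Fin d) →L[ℝ] ℝ)
      (L M₀ M₁ M₂ : ℝ), 0 ≤ L ∧
    (∀ x, HasFDerivAt g (g' x) x) ∧ LipschitzWith L.toNNReal g' ∧
    (∀ x, |g x| ≤ M₀) ∧ (∀ x, ‖g' x‖ ≤ M₁) ∧ (∀ x, |f x - g x| ≤ M₂) ∧
    r = M₀ + M₁ + L + t * M₂}

/-- The sup of the second-order differences `‖Δ²_y f‖_∞` over `|y| ≤ t^{-1/2}`. -/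
noncomputable def sup2 {d : ℕ} (t : ℝ) (f : EuclideanSpace ℝ (Fin d) → ℝ) : ℝ :=
  ⨆ y : {y : EuclideanSpace ℝ (Fin d) // ‖y‖ ≤ t ^ (-(1 / 2) : ℝ)},
    ⨆ x : EuclideanSpace ℝ (Fin d), |f (x + y) + f (x - y) - 2 * f x|

set_option maxHeartbeats 2000000 in
open MeasureTheory Metric ContinuousLinearMap Convolution in
/-- There are universal constants `0 < c < C` such that, for every bounded continuous
`f : ℝ^d → ℝ` and every `t ≥ 1`,
`c (‖f‖_∞ + t sup_{|y|≤t^{-1/2}} ‖Δ²_y f‖_∞) ≤ K(t, f, C^{1,1}, C_b)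
  ≤ C (‖f‖_∞ + t sup_{|y|≤t^{-1/2}} ‖Δ²_y f‖_∞)`. -/
theorem stmt14 (d : ℕ) :
    ∃ c C : ℝ, 0 < c ∧ c < C ∧
      ∀ f : EuclideanSpace ℝ (Fin d) → ℝ, Continuous f → (∃ B : ℝ, ∀ x, |f x| ≤ B) →
        ∀ t : ℝ, 1 ≤ t →
          c * ((⨆ x : EuclideanSpace ℝ (Fin d), |f x|) + t * sup2 t f) ≤ K14 t f ∧
          K14 t f ≤ C * ((⨆ x : EuclideanSpace ℝ (Fin d), |f x|) + t * sup2 t f) := by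
  classical
  set b : ContDiffBump (0 : EuclideanSpace ℝ (Fin d)) := ⟨1/2, 1, by norm_num, by norm_num⟩ with hb
  set ψ : EuclideanSpace ℝ (Fin d) → ℝ := b.normed volume with hψdef
  set k₁ : EuclideanSpace ℝ (Fin d) → EuclideanSpace ℝ (Fin d) →L[ℝ] ℝ := fderiv ℝ ψ with hk₁def
  set k₂ := fderiv ℝ k₁ with hk₂def
  have hC₂0 : (0:ℝ) ≤ ∫ y, ‖k₂ y‖ := integral_nonneg fun y => by simp only [Pi.zero_apply]; exact norm_nonneg (k₂ y)
  refine ⟨1/5, (∫ y, ‖k₂ y‖) + 4, by norm_num, by linarith, ?_⟩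
  intro f hf hfB t ht
  obtain ⟨B, hB⟩ := hfB
  have ht0 : (0:ℝ) < t := lt_of_lt_of_le one_pos ht
  set h : ℝ := t ^ (-(1/2) : ℝ) with hhdef
  have hh0 : 0 < h := Real.rpow_pos_of_pos ht0 _
  have hhh : h * h = t⁻¹ := by
    rw [hhdef, ← Real.rpow_add ht0]
    rw [show (-(1/2) + -(1/2) : ℝ) = -1 by norm_num, Real.rpow_neg_one]
  have hinv2 : h⁻¹ * h⁻¹ = t := by
    rw [← mul_inv, hhh, inv_inv]
  -- sup norm of f
  set B₀ : ℝ := ⨆ x : EuclideanSpace ℝ (Fin d), |f x| with hB₀def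
  have hfB₀ : ∀ x, |f x| ≤ B₀ := fun x =>
    le_ciSup ⟨B, by rintro _ ⟨x, rfl⟩; exact hB x⟩ x
  have hB₀0 : 0 ≤ B₀ := (abs_nonneg (f 0)).trans (hfB₀ 0)
  -- second modulus
  set S₂ : ℝ := sup2 t f with hS₂def
  have habs : ∀ x y : EuclideanSpace ℝ (Fin d), |f (x + y) + f (x - y) - 2 * f x| ≤ 4 * B := by
    intro x y
    have h1 := abs_le.mp (hB (x+y)); have h2 := abs_le.mp (hB (x - y)); have h3 := abs_le.mp (hB x)
    rw [abs_le]; constructor <;> linarith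
  haveI hne : Nonempty {y : EuclideanSpace ℝ (Fin d) // ‖y‖ ≤ t ^ (-(1/2) : ℝ)} :=
    ⟨⟨0, by rw [norm_zero]; exact (Real.rpow_pos_of_pos ht0 _).le⟩⟩
  have hS₂pt : ∀ y : EuclideanSpace ℝ (Fin d), ‖y‖ ≤ h →
      ∀ x, |f (x + y) + f (x - y) - 2 * f x| ≤ S₂ := by
    intro y hy x
    have h1 : |f (x + y) + f (x - y) - 2 * f x| ≤ ⨆ x, |f (x + y) + f (x - y) - 2 * f x| :=
      le_ciSup ⟨4*B, by rintro _ ⟨x, rfl⟩; exact habs x y⟩ x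
    have h2 : (⨆ x, |f (x + y) + f (x - y) - 2 * f x|) ≤ S₂ := by
      rw [hS₂def, sup2]
      exact le_ciSup
        (f := fun y : {y : EuclideanSpace ℝ (Fin d) // ‖y‖ ≤ t ^ (-(1/2) : ℝ)} =>
          ⨆ x, |f (x + ↑y) + f (x - ↑y) - 2 * f x|)
        ⟨4*B, by rintro _ ⟨y', rfl⟩; exact ciSup_le fun x => habs x y'⟩ ⟨y, hy⟩
    linarith
  have hS₂0 : 0 ≤ S₂ := by
    have := hS₂pt 0 (by rw [norm_zero]; exact hh0.le) 0
    simpa using (abs_nonneg _).trans this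
  -- rescaled function
  set u : EuclideanSpace ℝ (Fin d) → ℝ := fun z => f (h • z) with hudef
  have hu : Continuous u := hf.comp (continuous_const_smul _)
  have hω : ∀ z y : EuclideanSpace ℝ (Fin d), ‖y‖ ≤ 1 →
      |u (z + y) + u (z - y) - 2 * u z| ≤ S₂ := by
    intro z y hy
    have hnorm : ‖h • y‖ ≤ h := by
      rw [norm_smul, Real.norm_eq_abs, abs_of_pos hh0]
      calc h * ‖y‖ ≤ h * 1 := mul_le_mul_of_nonneg_left hy hh0.le
      _ = h := mul_one h
    have := hS₂pt (h • y) hnorm (h • z)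
    simpa [hudef, smul_add, smul_sub] using this
  -- bump properties
  have hψ2 : ContDiff ℝ 2 ψ := b.contDiff_normed
  have hψ1 : ContDiff ℝ 1 ψ := hψ2.of_le (by norm_num)
  have hψcs : HasCompactSupport ψ := b.hasCompactSupport_normed
  have hψcont : Continuous ψ := b.continuous_normed
  have hrOut : b.rOut = 1 := rfl
  have hψsupp : ∀ y, ψ y ≠ 0 → ‖y‖ ≤ 1 := by
    intro y hy
    have h1 : y ∈ Function.support ψ := hy
    rw [hψdef, b.support_normed_eq, hrOut] at h1
    exact (mem_ball_zero_iff.mp h1).le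
  have hk₁supp : ∀ y, k₁ y ≠ 0 → ‖y‖ ≤ 1 := by
    intro y hy
    have h1 : y ∈ tsupport ψ := by
      apply support_fderiv_subset (𝕜 := ℝ)
      rw [hk₁def] at hy
      exact hy
    rw [hψdef, b.tsupport_normed_eq, hrOut] at h1
    exact mem_closedBall_zero_iff.mp h1
  have hk₁cs : HasCompactSupport k₁ := hψcs.fderiv (𝕜 := ℝ)
  have hk₁cd : ContDiff ℝ 1 k₁ := hψ2.fderiv_right (by norm_num)
  have hk₂cont : Continuous k₂ := hk₁cd.continuous_fderiv one_ne_zero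
  have hk₂supp : ∀ y, k₂ y ≠ 0 → ‖y‖ ≤ 1 := by
    intro y hy
    have h1 : y ∈ tsupport k₁ := by
      apply support_fderiv_subset (𝕜 := ℝ)
      rw [hk₂def] at hy
      exact hy
    have h2 : tsupport k₁ ⊆ closedBall 0 1 := by
      apply closure_minimal _ isClosed_closedBall
      intro z hz
      exact mem_closedBall_zero_iff.mpr (hk₁supp z hz)
    exact mem_closedBall_zero_iff.mp (h2 h1)
  have hk₁d : ∀ x, HasFDerivAt ψ (k₁ x) x := fun x => ((hψ1.differentiable one_ne_zero) x).hasFDerivAt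
  have hk₂d : ∀ x, HasFDerivAt k₁ (k₂ x) x := fun x => ((hk₁cd.differentiable one_ne_zero) x).hasFDerivAt
  have hψe : ∀ y, ψ (-y) = ψ y := fun y => b.normed_neg y
  have hk₁odd : ∀ y, k₁ (-y) = - k₁ y := by
    intro y; ext v
    have := fderiv_flip14 ψ k₁ hk₁d 1 (fun x => by rw [hψe, one_smul]) y v
    simpa using this
  have hk₂even : ∀ y, k₂ (-y) = k₂ y := by
    intro y; ext v
    have := fderiv_flip14 k₁ k₂ hk₂d (-1) (fun x => by rw [hk₁odd, neg_one_smul]) y v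
    rw [this]
    simp
  -- convolution operators
  set L₀ : ℝ →L[ℝ] ℝ →L[ℝ] ℝ := ContinuousLinearMap.lsmul ℝ ℝ with hL₀def
  set L₁ := L₀.precompR (EuclideanSpace ℝ (Fin d)) with hL₁def
  set L₂ := L₁.precompR (EuclideanSpace ℝ (Fin d)) with hL₂def
  have hL₀ : ∀ (a : ℝ) (m : ℝ), L₀ a m = a • m := fun a m => by
    simp [hL₀def]
  have hL₁ : ∀ (a : ℝ) m, L₁ a m = a • m := fun a m => by
    ext v; simp [hL₁def, hL₀def]
  have hL₂ : ∀ (a : ℝ) m, L₂ a m = a • m := fun a m => by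
    ext v w; simp [hL₂def, hL₁def, hL₀def]
  set F : EuclideanSpace ℝ (Fin d) → ℝ := u ⋆[L₀, volume] ψ with hFdef
  set F₁ : EuclideanSpace ℝ (Fin d) → EuclideanSpace ℝ (Fin d) →L[ℝ] ℝ := u ⋆[L₁, volume] k₁ with hF₁def
  set F₂ : EuclideanSpace ℝ (Fin d) → EuclideanSpace ℝ (Fin d) →L[ℝ] EuclideanSpace ℝ (Fin d) →L[ℝ] ℝ := MeasureTheory.convolution (𝕜 := ℝ) u k₂ L₂ volume with hF₂def
  have hul : LocallyIntegrable u volume := hu.locallyIntegrable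
  have hFd : ∀ x, HasFDerivAt F (F₁ x) x := by
    intro x
    rw [hFdef, hF₁def, hL₁def, hk₁def]
    exact hψcs.hasFDerivAt_convolution_right L₀ hul hψ1 x
  have hF₁d : ∀ x, HasFDerivAt F₁ (F₂ x) x := by
    intro x
    rw [hF₁def, hF₂def, hL₂def, hk₂def]
    exact hk₁cs.hasFDerivAt_convolution_right L₁ hul hk₁cd x
  have hFrep : ∀ x, F x = ∫ y, u (x - y) • ψ y := by
    intro x; rw [hFdef]; exact conv_repr14 u ψ L₀ hL₀ x
  have hF₂rep : ∀ x, F₂ x = ∫ y, u (x - y) • k₂ y := by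
    intro x; rw [hF₂def]; exact conv_repr14 u k₂ L₂ hL₂ x
  -- bound on second derivative of F
  have hF₂b : ∀ x, ‖F₂ x‖ ≤ S₂ / 2 * ∫ y, ‖k₂ y‖ := by
    intro x
    have hint0 : (∫ y, k₂ y) = 0 := by
      rw [hk₂def]; exact my_integral_fderiv_zero14 hk₁cd hk₁cs
    have := second_diff_bound14 u hu k₂ hk₂cont hk₂supp hk₂even S₂ hω x
    have e : (∫ y, u (x - y) • k₂ y) - u x • ∫ y, k₂ y = ∫ y, u (x - y) • k₂ y := by
      rw [hint0]; ext v w; simp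
    rw [e] at this
    rw [hF₂rep x]
    exact this
  -- closeness of F to u
  have hψnn : ∀ y, 0 ≤ ψ y := fun y => by rw [hψdef]; exact b.nonneg_normed y
  have hψn : (fun y : EuclideanSpace ℝ (Fin d) => ‖ψ y‖) = ψ :=
    funext fun y => by rw [Real.norm_eq_abs, abs_of_nonneg (hψnn y)]
  have hψint : (∫ y, ψ y) = 1 := by rw [hψdef]; exact b.integral_normed
  have hFu : ∀ z, |F z - u z| ≤ S₂ / 2 := by
    intro z
    have := second_diff_bound14 u hu ψ hψcont hψsupp hψe S₂ hω z
    rw [hψn, hψint, mul_one, smul_eq_mul, mul_one] at this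
    rw [hFrep z, ← Real.norm_eq_abs]
    exact this
  -- sup bound on F
  have hψInt : Integrable ψ volume := by rw [hψdef]; exact b.integrable_normed
  have huB₀ : ∀ z, |u z| ≤ B₀ := fun z => hfB₀ _
  have hFb : ∀ z, |F z| ≤ B₀ := by
    intro z
    rw [hFrep z, ← Real.norm_eq_abs]
    have hle := norm_integral_le_of_norm_le (f := fun y => u (z - y) • ψ y) (hψInt.const_mul B₀)
      (Filter.Eventually.of_forall (fun y => by
        rw [norm_smul, Real.norm_eq_abs, Real.norm_eq_abs, abs_of_nonneg (hψnn y)]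
        exact mul_le_mul_of_nonneg_right (huB₀ _) (hψnn y)))
    calc ‖∫ y, u (z - y) • ψ y‖ ≤ ∫ y, B₀ * ψ y := hle
    _ = B₀ := by rw [integral_const_mul, hψint, mul_one]
  -- Lipschitz bound for F₁
  set LF := S₂ / 2 * ∫ y, ‖k₂ y‖ with hLFdef
  have hLF0 : 0 ≤ LF := mul_nonneg (by linarith) hC₂0
  have hLipF₁ : ∀ x₁ x₂, ‖F₁ x₁ - F₁ x₂‖ ≤ LF * ‖x₁ - x₂‖ := by
    intro x₁ x₂
    exact Convex.norm_image_sub_le_of_norm_hasFDerivWithin_le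
      (fun x _ => (hF₁d x).hasFDerivWithinAt) (fun x _ => hF₂b x) convex_univ
      (mem_univ x₂) (mem_univ x₁)
  -- rescale back
  set A : EuclideanSpace ℝ (Fin d) →L[ℝ] EuclideanSpace ℝ (Fin d) :=
    h⁻¹ • ContinuousLinearMap.id ℝ (EuclideanSpace ℝ (Fin d)) with hAdef
  have hAnorm : ‖A‖ ≤ h⁻¹ := by
    calc ‖A‖ ≤ ‖h⁻¹‖ * ‖ContinuousLinearMap.id ℝ (EuclideanSpace ℝ (Fin d))‖ := by
          rw [hAdef]; exact ContinuousLinearMap.opNorm_smul_le _ _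
    _ ≤ ‖h⁻¹‖ * 1 := mul_le_mul_of_nonneg_left norm_id_le (norm_nonneg _)
    _ = h⁻¹ := by rw [mul_one, Real.norm_eq_abs, abs_of_pos (inv_pos.mpr hh0)]
  set g : EuclideanSpace ℝ (Fin d) → ℝ := fun x => F (h⁻¹ • x) with hgdef
  set g' : EuclideanSpace ℝ (Fin d) → EuclideanSpace ℝ (Fin d) →L[ℝ] ℝ :=
    fun x => (F₁ (h⁻¹ • x)).comp A with hg'def
  have hg'd : ∀ x, HasFDerivAt g (g' x) x := by
    intro x
    have hA : HasFDerivAt (fun y : EuclideanSpace ℝ (Fin d) => h⁻¹ • y) A x := by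
      rw [hAdef]
      exact (hasFDerivAt_id x).const_smul h⁻¹
    exact (hFd (h⁻¹ • x)).comp x hA
  set Lc := t * LF with hLcdef
  have hLc0 : 0 ≤ Lc := mul_nonneg ht0.le hLF0
  have hgB : ∀ x, |g x| ≤ B₀ := fun x => hFb _
  have hcancel : ∀ x : EuclideanSpace ℝ (Fin d), h • (h⁻¹ • x) = x := fun x => by
    rw [smul_smul, mul_inv_cancel₀ hh0.ne', one_smul]
  have hM₂g : ∀ x, |f x - g x| ≤ S₂ / 2 := by
    intro x
    have h1 : f x = u (h⁻¹ • x) := by simp only [hudef]; rw [hcancel]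
    rw [h1, hgdef]
    rw [abs_sub_comm]
    exact hFu (h⁻¹ • x)
  have hLip : LipschitzWith (Real.toNNReal Lc) g' := by
    apply LipschitzWith.of_dist_le_mul
    intro x₁ x₂
    rw [dist_eq_norm, dist_eq_norm, Real.coe_toNNReal _ hLc0]
    have hsub : g' x₁ - g' x₂ = (F₁ (h⁻¹ • x₁) - F₁ (h⁻¹ • x₂)).comp A := by
      rw [hg'def, ContinuousLinearMap.sub_comp]
    rw [hsub]
    calc ‖(F₁ (h⁻¹ • x₁) - F₁ (h⁻¹ • x₂)).comp A‖
        ≤ ‖F₁ (h⁻¹ • x₁) - F₁ (h⁻¹ • x₂)‖ * ‖A‖ := ContinuousLinearMap.opNorm_comp_le _ _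
      _ ≤ (LF * ‖h⁻¹ • x₁ - h⁻¹ • x₂‖) * h⁻¹ :=
          mul_le_mul (hLipF₁ _ _) hAnorm (norm_nonneg _) (mul_nonneg hLF0 (norm_nonneg _))
      _ = Lc * ‖x₁ - x₂‖ := by
          rw [← smul_sub, norm_smul, Real.norm_eq_abs, abs_of_pos (inv_pos.mpr hh0), hLcdef]
          calc LF * (h⁻¹ * ‖x₁ - x₂‖) * h⁻¹ = (h⁻¹ * h⁻¹) * (LF * ‖x₁ - x₂‖) := by ring
          _ = t * LF * ‖x₁ - x₂‖ := by rw [hinv2]; ring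
  have hM₁g : ∀ x, ‖g' x‖ ≤ 2 * B₀ + Lc := by
    intro x
    refine ContinuousLinearMap.opNorm_le_bound _ (by linarith) ?_
    intro v
    rcases eq_or_ne v 0 with rfl | hv
    · simp
    · set e : EuclideanSpace ℝ (Fin d) := ‖v‖⁻¹ • v with hedef
      have he1 : ‖e‖ = 1 := norm_smul_inv_norm hv
      have taylor : ‖g (x + e) - g x - g' x e‖ ≤ Lc := by
        have key := Convex.norm_image_sub_le_of_norm_hasFDerivWithin_le
          (f := fun z => g z - g' x z) (f' := fun z => g' z - g' x) (s := closedBall x 1)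
          (fun z _ => ((hg'd z).sub ((g' x).hasFDerivAt)).hasFDerivWithinAt)
          (fun z hz => by
            have hd := hLip.dist_le_mul z x
            rw [dist_eq_norm, dist_eq_norm, Real.coe_toNNReal _ hLc0] at hd
            have hz1 : ‖z - x‖ ≤ 1 := mem_closedBall_iff_norm.mp hz
            calc ‖g' z - g' x‖ ≤ Lc * ‖z - x‖ := hd
            _ ≤ Lc * 1 := mul_le_mul_of_nonneg_left hz1 hLc0
            _ = Lc := mul_one _)
          (convex_closedBall x 1) (mem_closedBall_self zero_le_one)
          (by rw [mem_closedBall_iff_norm, add_sub_cancel_left, he1])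
        have key' : ‖(g (x+e) - g' x (x+e)) - (g x - g' x x)‖ ≤ Lc * ‖(x+e) - x‖ := key
        have hsimp : (g (x+e) - g' x (x+e)) - (g x - g' x x) = g (x+e) - g x - g' x e := by
          rw [map_add]; ring
        rw [hsimp] at key'
        have hnn : ‖(x+e) - x‖ = 1 := by simp [he1]
        rw [hnn, mul_one] at key'
        exact key'
      have hge : ‖g' x e‖ ≤ 2 * B₀ + Lc := by
        have h1 : ‖g (x+e) - g x‖ ≤ 2 * B₀ := by
          rw [Real.norm_eq_abs]
          have e1 := abs_le.mp (hgB (x+e)); have e2 := abs_le.mp (hgB x)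
          rw [abs_le]; constructor <;> linarith
        calc ‖g' x e‖ = ‖(g (x+e) - g x) - (g (x+e) - g x - g' x e)‖ := by ring_nf
        _ ≤ ‖g (x+e) - g x‖ + ‖g (x+e) - g x - g' x e‖ := norm_sub_le _ _
        _ ≤ 2 * B₀ + Lc := add_le_add h1 taylor
      have hve : ‖v‖ • e = v := by
        rw [hedef, smul_smul, mul_inv_cancel₀ (norm_ne_zero_iff.mpr hv), one_smul]
      have hv' : g' x v = ‖v‖ • g' x e := by
        calc g' x v = g' x (‖v‖ • e) := by rw [hve]
        _ = ‖v‖ • g' x e := map_smul _ _ _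
      rw [hv', norm_smul, Real.norm_eq_abs, abs_of_pos (norm_pos_iff.mpr hv)]
      calc ‖v‖ * ‖g' x e‖ ≤ ‖v‖ * (2 * B₀ + Lc) :=
        mul_le_mul_of_nonneg_left hge (norm_nonneg v)
      _ = (2 * B₀ + Lc) * ‖v‖ := by ring
  -- boundedness below of the K-functional set
  have hbdd : BddBelow {r : ℝ | ∃ (g : EuclideanSpace ℝ (Fin d) → ℝ)
      (g' : EuclideanSpace ℝ (Fin d) → EuclideanSpace ℝ (Fin d) →L[ℝ] ℝ)
      (L M₀ M₁ M₂ : ℝ), 0 ≤ L ∧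
    (∀ x, HasFDerivAt g (g' x) x) ∧ LipschitzWith L.toNNReal g' ∧
    (∀ x, |g x| ≤ M₀) ∧ (∀ x, ‖g' x‖ ≤ M₁) ∧ (∀ x, |f x - g x| ≤ M₂) ∧
    r = M₀ + M₁ + L + t * M₂} := by
    refine ⟨0, ?_⟩
    rintro r ⟨G, G', L, M₀, M₁, M₂, hL0, _, _, hM₀, hM₁', hM₂, rfl⟩
    have h1 : 0 ≤ M₀ := (abs_nonneg _).trans (hM₀ 0)
    have h2 : 0 ≤ M₁ := (norm_nonneg _).trans (hM₁' 0)
    have h3 : 0 ≤ M₂ := (abs_nonneg _).trans (hM₂ 0)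
    have h4 : 0 ≤ t * M₂ := mul_nonneg ht0.le h3
    linarith
  have hmem : (B₀ + (2 * B₀ + Lc) + Lc + t * (S₂ / 2)) ∈ {r : ℝ |
      ∃ (g : EuclideanSpace ℝ (Fin d) → ℝ)
      (g' : EuclideanSpace ℝ (Fin d) → EuclideanSpace ℝ (Fin d) →L[ℝ] ℝ)
      (L M₀ M₁ M₂ : ℝ), 0 ≤ L ∧
    (∀ x, HasFDerivAt g (g' x) x) ∧ LipschitzWith L.toNNReal g' ∧
    (∀ x, |g x| ≤ M₀) ∧ (∀ x, ‖g' x‖ ≤ M₁) ∧ (∀ x, |f x - g x| ≤ M₂) ∧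
    r = M₀ + M₁ + L + t * M₂} :=
    ⟨g, g', Lc, B₀, 2 * B₀ + Lc, S₂ / 2, hLc0, hg'd, hLip, hgB, hM₁g, hM₂g, rfl⟩
  constructor
  · -- lower bound
    unfold K14
    apply le_csInf ⟨_, hmem⟩
    rintro r ⟨G, G', L, M₀, M₁, M₂, hL0, hGd, hGLip, hM₀, hM₁', hM₂, rfl⟩
    have hM₀0 : 0 ≤ M₀ := (abs_nonneg _).trans (hM₀ 0)
    have hM₁0 : 0 ≤ M₁ := (norm_nonneg _).trans (hM₁' 0)
    have hM₂0 : 0 ≤ M₂ := (abs_nonneg _).trans (hM₂ 0)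
    have taylorG : ∀ (x y : EuclideanSpace ℝ (Fin d)),
        |G (x + y) - G x - G' x y| ≤ L * (‖y‖ * ‖y‖) := by
      intro x y
      rcases eq_or_ne y 0 with rfl | hy
      · simp
      have hynorm : (0:ℝ) < ‖y‖ := norm_pos_iff.mpr hy
      have key := Convex.norm_image_sub_le_of_norm_hasFDerivWithin_le
        (f := fun z => G z - G' x z) (f' := fun z => G' z - G' x) (s := closedBall x ‖y‖)
        (fun z _ => ((hGd z).sub ((G' x).hasFDerivAt)).hasFDerivWithinAt)
        (fun z hz => by
          have hd := hGLip.dist_le_mul z x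
          rw [dist_eq_norm, dist_eq_norm, Real.coe_toNNReal _ hL0] at hd
          calc ‖G' z - G' x‖ ≤ L * ‖z - x‖ := hd
          _ ≤ L * ‖y‖ := mul_le_mul_of_nonneg_left (mem_closedBall_iff_norm.mp hz) hL0)
        (convex_closedBall x ‖y‖) (mem_closedBall_self hynorm.le)
        (by rw [mem_closedBall_iff_norm, add_sub_cancel_left])
      have key' : ‖(G (x+y) - G' x (x+y)) - (G x - G' x x)‖ ≤ (L * ‖y‖) * ‖(x+y) - x‖ := key
      have hsimp : (G (x+y) - G' x (x+y)) - (G x - G' x x) = G (x+y) - G x - G' x y := by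
        rw [map_add]; ring
      rw [hsimp] at key'
      have hnn : ‖(x+y) - x‖ = ‖y‖ := by simp
      rw [hnn] at key'
      calc |G (x + y) - G x - G' x y| = ‖G (x + y) - G x - G' x y‖ := (Real.norm_eq_abs _).symm
      _ ≤ (L * ‖y‖) * ‖y‖ := key'
      _ = L * (‖y‖ * ‖y‖) := by ring
    have hΔ : ∀ y : EuclideanSpace ℝ (Fin d), ‖y‖ ≤ h →
        ∀ x, |f (x + y) + f (x - y) - 2 * f x| ≤ 2 * L * t⁻¹ + 4 * M₂ := by
      intro y hy x
      have t1 := taylorG x y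
      have t2 := taylorG x (-y)
      simp only [← sub_eq_add_neg, map_neg, norm_neg] at t2
      have hyy : ‖y‖ * ‖y‖ ≤ t⁻¹ := by
        have hm : ‖y‖ * ‖y‖ ≤ h * h := mul_le_mul hy hy (norm_nonneg _) hh0.le
        linarith [hhh]
      have hGΔ : |G (x+y) + G (x-y) - 2 * G x| ≤ 2 * L * t⁻¹ := by
        have a1 := abs_le.mp t1
        have a2 := abs_le.mp t2
        have hLyy : L * (‖y‖ * ‖y‖) ≤ L * t⁻¹ := mul_le_mul_of_nonneg_left hyy hL0
        rw [abs_le]; constructor <;> linarith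
      have e1 := abs_le.mp (hM₂ (x+y))
      have e2 := abs_le.mp (hM₂ (x-y))
      have e3 := abs_le.mp (hM₂ x)
      have e4 := abs_le.mp hGΔ
      rw [abs_le]; constructor <;> linarith
    have hS₂le : S₂ ≤ 2 * L * t⁻¹ + 4 * M₂ := by
      rw [hS₂def, sup2]
      apply ciSup_le
      intro y
      apply ciSup_le
      intro x
      exact hΔ y.1 y.2 x
    have htS : t * S₂ ≤ 2 * L + 4 * (t * M₂) := by
      have hmul := mul_le_mul_of_nonneg_left hS₂le ht0.le
      have htt : t * t⁻¹ = 1 := mul_inv_cancel₀ ht0.ne'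
      calc t * S₂ ≤ t * (2 * L * t⁻¹ + 4 * M₂) := hmul
      _ = 2 * L * (t * t⁻¹) + 4 * (t * M₂) := by ring
      _ = 2 * L + 4 * (t * M₂) := by rw [htt]; ring
    have hB₀le : B₀ ≤ M₀ + M₂ := by
      rw [hB₀def]
      apply ciSup_le
      intro x
      have e1 := abs_le.mp (hM₀ x)
      have e2 := abs_le.mp (hM₂ x)
      rw [abs_le]; constructor <;> linarith
    have htM₂ : M₂ ≤ t * M₂ := le_mul_of_one_le_left hM₂0 ht
    have htM₂0 : 0 ≤ t * M₂ := mul_nonneg ht0.le hM₂0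
    linarith
  · -- upper bound
    unfold K14
    refine le_trans (csInf_le hbdd hmem) ?_
    rw [hLcdef, hLFdef]
    set c2 : ℝ := ∫ y, ‖k₂ y‖ with hc2def
    clear_value c2
    clear_value B₀ S₂
    have h1 : 0 ≤ t * S₂ := mul_nonneg ht0.le hS₂0
    have h2 : 0 ≤ c2 * B₀ := mul_nonneg hC₂0 hB₀0
    have h3 : 0 ≤ c2 * (t * S₂) := mul_nonneg hC₂0 h1
    linarith [hB₀0, h1, h2, h3]
end

section
/- Let 0 < β < 1, a₁ ≥ β^{−(1−β)}, and define a_{k+1} = a_k + ((1−β)/β)·a_k^{−β/(1−β)} for k ≥ 1. Then there exists a constant C depending only on β such that for all k ≥ 1: β^{−(1−β)} k^{1−β} ≤ a_k ≤ [a₁^{1/(1−β)} + β^{−1}(k−1) + C·log k]^{1−β}. -/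
open Real

-- exp x ≤ 1 + x + x^2 for 0 ≤ x ≤ 1
lemma exp_quad {x : ℝ} (h1 : 0 ≤ x) (h2 : x ≤ 1) : Real.exp x ≤ 1 + x + x ^ 2 := by
  have := Real.exp_bound' h1 h2 (n := 2) (by norm_num)
  simp [Finset.sum_range_succ] at this
  nlinarith [sq_nonneg x]

/-- Let `0 < β < 1`, `a₁ ≥ β^{−(1−β)}`, and `a_{k+1} = a_k + ((1−β)/β) a_k^{−β/(1−β)}` for
`k ≥ 1`. Then there is a constant `C = C(β)` such that for all `k ≥ 1`,
`β^{−(1−β)} k^{1−β} ≤ a_k ≤ [a₁^{1/(1−β)} + β⁻¹(k−1) + C log k]^{1−β}`. -/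
theorem stmt15 (β : ℝ) (hβ : β ∈ Set.Ioo (0 : ℝ) 1) :
    ∃ C : ℝ, 0 < C ∧ ∀ a : ℕ → ℝ,
      β ^ (-(1 - β)) ≤ a 1 →
      (∀ k : ℕ, 1 ≤ k → a (k + 1) = a k + (1 - β) / β * a k ^ (-β / (1 - β))) →
      ∀ k : ℕ, 1 ≤ k →
        β ^ (-(1 - β)) * (k : ℝ) ^ (1 - β) ≤ a k ∧
        a k ≤ (a 1 ^ (1 / (1 - β)) + β⁻¹ * ((k : ℝ) - 1) + C * Real.log k) ^ (1 - β) := by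
  obtain ⟨hb0, hb1⟩ := hβ
  have h1b : (0:ℝ) < 1 - β := by linarith
  set p : ℝ := 1 / (1 - β) with hp
  clear_value p
  have hp1 : 1 ≤ p := by rw [hp, le_div_iff₀ h1b]; linarith
  have hp0 : 0 < p := by linarith
  have hpmul : p * (1 - β) = 1 := by rw [hp]; field_simp
  set c : ℝ := (1 - β) / β with hc
  clear_value c
  have hc0 : 0 < c := by rw [hc]; positivity
  have hpc : p * c = 1 / β := by rw [hp, hc]; field_simp
  refine ⟨2 / β, by positivity, ?_⟩
  intro a ha1 hrec
  have hβpow : (0:ℝ) < β ^ (-(1 - β)) := Real.rpow_pos_of_pos hb0 _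
  have ha1pos : 0 < a 1 := lt_of_lt_of_le hβpow ha1
  set b : ℕ → ℝ := fun k => a k ^ p with hbdef
  clear_value b
  have hbk : ∀ k, b k = a k ^ p := fun k => by rw [hbdef]
  have hb1' : 1 / β ≤ b 1 := by
    have h2 : (β ^ (-(1 - β))) ^ p ≤ (a 1) ^ p :=
      Real.rpow_le_rpow (le_of_lt hβpow) ha1 (le_of_lt hp0)
    have h3 : (β ^ (-(1 - β))) ^ p = β ^ (-(1:ℝ)) := by
      rw [← Real.rpow_mul hb0.le]
      congr 1
      linear_combination -hpmul
    rw [Real.rpow_neg_one] at h3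
    calc 1 / β = β⁻¹ := one_div β
      _ = (β ^ (-(1 - β))) ^ p := h3.symm
      _ ≤ b 1 := by rw [hbk 1]; exact h2
  -- main induction
  have key : ∀ k : ℕ, 1 ≤ k → 0 < a k ∧ (k:ℝ)/β ≤ b k ∧
      b k ≤ b 1 + ((k:ℝ)-1)/β + (2/β) * Real.log k := by
    intro k hk
    induction k, hk using Nat.le_induction with
    | base =>
      refine ⟨ha1pos, by rw [Nat.cast_one]; exact (one_div β) ▸ hb1', ?_⟩
      simp [Real.log_one]
    | succ k hk ih =>
      obtain ⟨hApos, hlow, hhigh⟩ := ih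
      have hk1 : (1:ℝ) ≤ (k:ℝ) := by exact_mod_cast hk
      set A := a k with hA
      clear_value A
      have hbkA : b k = A ^ p := by rw [hbk, hA]
      have hbkpos : 0 < b k := by rw [hbkA]; exact Real.rpow_pos_of_pos hApos p
      set s : ℝ := c / A ^ p with hs
      clear_value s
      have hApow : (0:ℝ) < A ^ p := by rw [← hbkA]; exact hbkpos
      have hs0 : 0 < s := by rw [hs]; positivity
      have h1s : (0:ℝ) < 1 + s := by linarith
      have hsA : s * A ^ p = c := by
        rw [hs]; exact div_mul_cancel₀ c (ne_of_gt hApow)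
      have hstep : a (k+1) = A * (1 + s) := by
        rw [hrec k hk, ← hA]
        have h1 : -β/(1-β) = 1 + (-p) := by
          rw [hp]; field_simp; ring
        have hexp : A ^ (-β/(1-β)) = A * A ^ (-p) := by
          rw [h1, Real.rpow_add hApos, Real.rpow_one]
        rw [hexp, Real.rpow_neg hApos.le]
        have h2 : c * (A * (A ^ p)⁻¹) = A * s := by
          rw [hs]; field_simp
        rw [h2]; ring
      have hbsucc : b (k+1) = A ^ p * (1+s) ^ p := by
        rw [hbk, hstep, Real.mul_rpow hApos.le h1s.le]
      have hposnext : 0 < a (k+1) := by rw [hstep]; positivity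
      -- lower bound step
      have hbern : 1 + p * s ≤ (1+s) ^ p :=
        one_add_mul_self_le_rpow_one_add (by linarith) hp1
      have hc' : p * (s * A ^ p) = p * c := by rw [hsA]
      have hlow' : ((k:ℝ)+1)/β ≤ b (k+1) := by
        have hm : A ^ p * (1 + p * s) ≤ A ^ p * (1+s)^p :=
          mul_le_mul_of_nonneg_left hbern hApow.le
        have heq : A ^ p * (1 + p * s) = A ^ p + p * c := by
          linear_combination hc'
        have hsplit : ((k:ℝ)+1)/β = (k:ℝ)/β + 1/β := by ring
        rw [hbsucc, hsplit]
        linarith [hpc.le, hpc.ge]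
      -- upper bound step
      have hkpos : (0:ℝ) < (k:ℝ) := by linarith
      have hsle : s ≤ (1-β)/k := by
        have h1 : s ≤ c / ((k:ℝ)/β) := by
          rw [hs, ← hbkA]
          exact div_le_div_of_nonneg_left hc0.le (by positivity) hlow
        have h2 : c / ((k:ℝ)/β) = (1-β)/k := by
          rw [hc]; field_simp
        linarith [h2.le, h2.ge]
      have hps1 : p * s ≤ 1/k := by
        have h1 : p * s ≤ p * ((1-β)/k) := mul_le_mul_of_nonneg_left hsle hp0.le
        have h2 : p * ((1-β)/k) = 1/k := by
          rw [hp]; field_simp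
        linarith
      have hps1' : p * s ≤ 1 := le_trans hps1 (by
        rw [div_le_one hkpos]; exact hk1)
      have hexpub : (1+s) ^ p ≤ 1 + p*s + (p*s)^2 := by
        have hlog : Real.log (1+s) ≤ s := by
          have := Real.log_le_sub_one_of_pos h1s
          linarith
        have h1 : (1+s) ^ p = Real.exp (p * Real.log (1+s)) := by
          rw [Real.rpow_def_of_pos h1s, mul_comm]
        have h2 : Real.exp (p * Real.log (1+s)) ≤ Real.exp (p * s) :=
          Real.exp_le_exp.2 (mul_le_mul_of_nonneg_left hlog hp0.le)
        have h3 := exp_quad (by positivity) hps1'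
        linarith [h1.le, h1.ge]
      have hhigh' : b (k+1) ≤ b 1 + (((k:ℝ)+1)-1)/β + (2/β) * Real.log ((k:ℝ)+1) := by
        have hmul : b (k+1) ≤ A ^ p * (1 + p*s + (p*s)^2) := by
          rw [hbsucc]
          exact mul_le_mul_of_nonneg_left hexpub hApow.le
        have heq2 : A ^ p * (1 + p*s + (p*s)^2) = A ^ p + p*(s*A^p) + p^2*s*(s*A^p) := by
          ring
        rw [hsA] at heq2
        have hquad : p^2*s*c ≤ 1/(β*k) := by
          have h1 : p^2*s*c ≤ p^2*((1-β)/k)*c := by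
            have := mul_le_mul_of_nonneg_left hsle (show (0:ℝ) ≤ p^2*c by positivity)
            linarith [this]
          have h2 : p^2*((1-β)/k)*c = 1/(β*k) := by
            rw [hp, hc]; field_simp
          linarith
        have hlogstep : 1/(β*k) ≤ (2/β) * (Real.log ((k:ℝ)+1) - Real.log k) := by
          have hkne : (k:ℝ) ≠ 0 := ne_of_gt hkpos
          have hk1ne : (k:ℝ)+1 ≠ 0 := by positivity
          have hdiv : Real.log ((k:ℝ)/((k:ℝ)+1)) ≤ (k:ℝ)/((k:ℝ)+1) - 1 :=
            Real.log_le_sub_one_of_pos (by positivity)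
          have hld : Real.log ((k:ℝ)/((k:ℝ)+1)) = Real.log k - Real.log ((k:ℝ)+1) := by
            rw [Real.log_div hkne hk1ne]
          have hfrac : (k:ℝ)/((k:ℝ)+1) - 1 = -(1/((k:ℝ)+1)) := by field_simp; ring
          have h1 : 1/((k:ℝ)+1) ≤ Real.log ((k:ℝ)+1) - Real.log k := by
            rw [hld, hfrac] at hdiv; linarith
          have h2 : 1/(2*(k:ℝ)) ≤ 1/((k:ℝ)+1) := by
            apply div_le_div_of_nonneg_left one_pos.le (by positivity)
            linarith
          have h3 : 1/(β*k) = (2/β) * (1/(2*(k:ℝ))) := by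
            field_simp
          rw [h3]
          have h4 : (0:ℝ) ≤ 2/β := by positivity
          exact mul_le_mul_of_nonneg_left (h2.trans h1) h4
        have hAbk : A ^ p = b k := hbkA.symm
        have hsplit2 : ((k:ℝ)-1)/β + 1/β = (((k:ℝ)+1)-1)/β := by ring
        rw [hAbk] at hmul heq2
        linarith [hpc.le, hpc.ge, hhigh, heq2.le, heq2.ge]
      refine ⟨hposnext, ?_, ?_⟩
      · push_cast; linarith
      · push_cast; linarith
  -- conclude
  intro k hk
  obtain ⟨hApos, hlow, hhigh⟩ := key k hk
  have hak : (b k) ^ (1-β) = a k := by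
    rw [hbk k, ← Real.rpow_mul hApos.le, hpmul, Real.rpow_one]
  have hkpos : (0:ℝ) < (k:ℝ) := by exact_mod_cast hk
  constructor
  · have h1 : ((k:ℝ)/β) ^ (1-β) ≤ (b k) ^ (1-β) :=
      Real.rpow_le_rpow (by positivity) hlow h1b.le
    have h2 : ((k:ℝ)/β) ^ (1-β) = β ^ (-(1 - β)) * (k:ℝ) ^ (1-β) := by
      rw [Real.div_rpow hkpos.le hb0.le, Real.rpow_neg hb0.le]
      ring
    rw [hak] at h1
    linarith [h2.le, h2.ge, h1]
  · have hb1eq : b 1 = a 1 ^ p := hbk 1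
    have h1 : (b k) ^ (1-β) ≤ (b 1 + ((k:ℝ)-1)/β + (2/β) * Real.log k) ^ (1-β) :=
      Real.rpow_le_rpow (by rw [hbk k]; exact (Real.rpow_pos_of_pos hApos p).le) hhigh h1b.le
    rw [hak] at h1
    have : b 1 + ((k:ℝ)-1)/β + (2/β) * Real.log k
        = a 1 ^ p + β⁻¹ * ((k:ℝ)-1) + (2/β) * Real.log k := by
      rw [hb1eq]; ring
    rw [this] at h1
    exact h1
end

section
/- Let X ⊆ X̃ and Y be normed spaces, (μₙ) Borel probability measures on X̃ converging weakly to μ, and Φ : X → Y a map. Assume: (i) for every ε > 0 there is C_ε with sup_n μₙ({x ∈ X : ‖x‖_X > C_ε}) ≤ ε; (ii) whenever xₙ ∈ X, ‖xₙ − x‖_{X̃} → 0 and sup_n ‖xₙ‖_X ≤ R, then x ∈ X with ‖x‖_X ≤ R and Φ(xₙ) → Φ(x) in Y. Then Φ_♯μₙ converges weakly to Φ_♯μ. -/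
open Set Filter MeasureTheory
open scoped ENNReal BoundedContinuousFunction

/-- A generalized mapping theorem: if `μₙ → μ` weakly on `X̃`, the restrictions of `μₙ` to the
subspace `X ⊆ X̃` are uniformly tight with respect to the `X`-norm, and `Φ : X → Y` is
continuous along `X̃`-convergent, `X`-bounded sequences (with the `X`-ball of radius `R` being
closed under such limits), then the pushforwards `Φ_♯μₙ` converge weakly to `Φ_♯μ`, in the
Portmanteau sense: `limsup μₙ(Φ⁻¹ F) ≤ μ(Φ⁻¹ F)` for every closed `F ⊆ Y`. -/
theorem stmt17 {X Xt Y : Type*}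
    [NormedAddCommGroup X] [NormedSpace ℝ X]
    [NormedAddCommGroup Xt] [NormedSpace ℝ Xt]
    [NormedAddCommGroup Y] [NormedSpace ℝ Y]
    [MeasurableSpace Xt] [OpensMeasurableSpace Xt] [BorelSpace Xt]
    (ι : X →ₗ[ℝ] Xt) (hι : Function.Injective ι)
    (Φ : X → Y)
    (μs : ℕ → Measure Xt) (μ : Measure Xt)
    [∀ n, IsProbabilityMeasure (μs n)] [IsProbabilityMeasure μ]
    -- (a) weak convergence of `μₙ` to `μ` in the topology of `X̃`
    (hweak : ∀ f : Xt →ᵇ ℝ,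
      Tendsto (fun n => ∫ z, f z ∂(μs n)) atTop (nhds (∫ z, f z ∂μ)))
    -- (b) uniform tightness of the `X`-norm under `μₙ`
    (htight : ∀ ε : ℝ, 0 < ε → ∃ Cε : ℝ,
      ∀ n, μs n {z : Xt | ∃ a : X, ι a = z ∧ Cε < ‖a‖} ≤ ENNReal.ofReal ε)
    -- (c) sequential closedness/continuity of `Φ` on `X`-bounded sets
    (hcont : ∀ (z : Xt) (xs : ℕ → X) (R : ℝ),
      Tendsto (fun n => ‖ι (xs n) - z‖) atTop (nhds 0) → (∀ n, ‖xs n‖ ≤ R) →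
      ∃ a : X, ι a = z ∧ ‖a‖ ≤ R ∧ Tendsto (fun n => Φ (xs n)) atTop (nhds (Φ a))) :
    ∀ F : Set Y, IsClosed F →
      limsup (fun n => μs n (ι '' (Φ ⁻¹' F))) atTop ≤ μ (ι '' (Φ ⁻¹' F)) := by
  intro F hF
  -- weak convergence as convergence of probability measures
  set μsP : ℕ → ProbabilityMeasure Xt := fun n => ⟨μs n, inferInstance⟩ with hμsP
  set μP : ProbabilityMeasure Xt := ⟨μ, inferInstance⟩ with hμP
  have hP : Tendsto μsP atTop (nhds μP) := by
    rw [ProbabilityMeasure.tendsto_iff_forall_integral_tendsto]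
    exact hweak
  refine ENNReal.le_of_forall_pos_le_add fun ε hε _ => ?_
  obtain ⟨C, hC⟩ := htight ε (by exact_mod_cast hε)
  set AR : Set Xt := {z | ∃ a : X, ι a = z ∧ ‖a‖ ≤ C ∧ Φ a ∈ F} with hAR
  have hARclosed : IsClosed AR := by
    apply IsSeqClosed.isClosed
    intro zs z hzs hz
    choose a ha hnorm hmem using hzs
    have hconv : Tendsto (fun n => ‖ι (a n) - z‖) atTop (nhds 0) := by
      have h := tendsto_iff_norm_sub_tendsto_zero.mp hz
      simpa [ha] using h
    obtain ⟨b, hb, hbnorm, hbt⟩ := hcont z a C hconv hnorm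
    exact ⟨b, hb, hbnorm, hF.mem_of_tendsto hbt (Eventually.of_forall hmem)⟩
  have hsub : AR ⊆ ι '' (Φ ⁻¹' F) := fun z ⟨a, ha, _, hm⟩ => ⟨a, hm, ha⟩
  have hbound : ∀ n, μs n (ι '' (Φ ⁻¹' F)) ≤ μs n AR + (ε : ℝ≥0∞) := by
    intro n
    have hcover : ι '' (Φ ⁻¹' F) ⊆ AR ∪ {z : Xt | ∃ a : X, ι a = z ∧ C < ‖a‖} := by
      rintro z ⟨a, hm, rfl⟩
      rcases le_or_gt ‖a‖ C with h | h
      · exact Or.inl ⟨a, rfl, h, hm⟩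
      · exact Or.inr ⟨a, rfl, h⟩
    have h1 : μs n (ι '' (Φ ⁻¹' F)) ≤ μs n AR + μs n {z : Xt | ∃ a : X, ι a = z ∧ C < ‖a‖} :=
      (measure_mono hcover).trans (measure_union_le _ _)
    have h2 : μs n {z : Xt | ∃ a : X, ι a = z ∧ C < ‖a‖} ≤ (ε : ℝ≥0∞) := by
      simpa [ENNReal.ofReal_coe_nnreal] using hC n
    exact h1.trans (add_le_add_right h2 _)
  have hport : limsup (fun n => μs n AR) atTop ≤ μ AR :=
    ProbabilityMeasure.limsup_measure_closed_le_of_tendsto hP hARclosed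
  calc limsup (fun n => μs n (ι '' (Φ ⁻¹' F))) atTop
      ≤ limsup (fun n => μs n AR + (ε : ℝ≥0∞)) atTop :=
        limsup_le_limsup (Eventually.of_forall hbound)
    _ = limsup (fun n => μs n AR) atTop + (ε : ℝ≥0∞) := by
        apply limsup_add_const _ _ _ ⟨⊤, Eventually.of_forall fun _ => le_top⟩
          isCobounded_le_of_bot
    _ ≤ μ AR + (ε : ℝ≥0∞) := add_le_add_left hport _
    _ ≤ μ (ι '' (Φ ⁻¹' F)) + (ε : ℝ≥0∞) := add_le_add_left (measure_mono hsub) _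
end
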